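/- arXiv:2209.13134 — 5 statements merged into one kernel-verified Lean document; each statement's English description precedes it below -/
import Mathlib

section
/- Let T be a finite rooted tree with n ≥ 1 nodes in which every node has at most two children (a rooted binary tree), with root u. Then the number of matchings of T that contain no edge incident to the root u is at most F_n, the n-th Fibonacci number (with F_1 = F_2 = 1). -/
/-- `M` is a matching of the graph `G`: a set of edges of `G` no two of which
share an endpoint (the empty set counts as a matching). -/
def IsMatchingSet {V : Type*} (G : SimpleGraph V) (M : Finset (Sym2 V)) : Prop :=
  (∀ e ∈ M, e ∈ G.edgeSet) ∧
    ∀ e ∈ M, ∀ f ∈ M, e ≠ f → ∀ v : V, ¬(v ∈ e ∧ v ∈ f)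

open SimpleGraph Finset

/-- The set of matchings of `G` all of whose edges have both endpoints in `S`. -/
def msetIn {V : Type*} (G : SimpleGraph V) (S : Finset V) : Set (Finset (Sym2 V)) :=
  {M | IsMatchingSet G M ∧ ∀ e ∈ M, ∀ x ∈ e, x ∈ S}

lemma exists_leaf {V : Type*} [Fintype V] (G : SimpleGraph V) (hG : G.IsAcyclic)
    (S : Finset V) (hS : S.Nonempty) :
    ∃ v ∈ S, ∀ w1 ∈ S, ∀ w2 ∈ S, G.Adj v w1 → G.Adj v w2 → w1 = w2 := by
  classical
  set L : Set ℕ := {n | ∃ (b a : V) (p : G.Walk b a), p.IsPath ∧ (∀ x ∈ p.support, x ∈ S) ∧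
    p.length = n} with hL
  obtain ⟨v0, hv0⟩ := hS
  have h0 : (0 : ℕ) ∈ L := ⟨v0, v0, Walk.nil, by simp, by simp [hv0], rfl⟩
  have hbdd : BddAbove L := by
    refine ⟨Fintype.card V, fun n hn => ?_⟩
    obtain ⟨b, a, p, hp, _, hlen⟩ := hn
    exact hlen ▸ hp.length_lt.le
  have hmem : sSup L ∈ L := Nat.sSup_mem ⟨0, h0⟩ hbdd
  obtain ⟨b, a, p, hp, hsupp, hlen⟩ := hmem
  refine ⟨b, hsupp _ p.start_mem_support, ?_⟩
  have key : ∀ w ∈ S, G.Adj b w → p.support.tail.head? = some w := by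
    intro w hwS hadj
    have hwsupp : w ∈ p.support := by
      by_contra hns
      have hpath' : (Walk.cons hadj.symm p).IsPath := hp.cons hns
      have hmem' : p.length + 1 ∈ L := by
        refine ⟨w, a, Walk.cons hadj.symm p, hpath', ?_, by simp⟩
        intro x hx
        rw [Walk.support_cons, List.mem_cons] at hx
        rcases hx with rfl | hx
        · exact hwS
        · exact hsupp x hx
      have := le_csSup hbdd hmem'
      omega
    have hteq : (⟨p.takeUntil w hwsupp, hp.takeUntil hwsupp⟩ : G.Path b w) =
        Path.singleton hadj := hG.path_unique _ _
    have hwalk : p.takeUntil w hwsupp = Walk.cons hadj Walk.nil :=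
      congrArg Subtype.val hteq
    have hspec := p.take_spec hwsupp
    rw [hwalk, Walk.cons_append, Walk.nil_append] at hspec
    have hps : p.support = b :: (p.dropUntil w hwsupp).support := by
      have := congrArg Walk.support hspec
      rw [Walk.support_cons] at this
      exact this.symm
    rw [hps]
    rw [List.tail_cons, Walk.support_eq_cons]
    rfl
  intro w1 h1 w2 h2 ha1 ha2
  have k1 := key w1 h1 ha1
  have k2 := key w2 h2 ha2
  rw [k1] at k2
  exact Option.some.inj k2

lemma msetIn_card_le {V : Type*} [Fintype V] (G : SimpleGraph V) (hG : G.IsAcyclic) :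
    ∀ S : Finset V, (msetIn G S).ncard ≤ Nat.fib (S.card + 1) := by
  classical
  intro S
  induction S using Finset.strongInduction with
  | _ S ih =>
  rcases S.eq_empty_or_nonempty with rfl | hS
  · have hsub : msetIn G ∅ ⊆ {(∅ : Finset (Sym2 V))} := by
      intro M hM
      simp only [Set.mem_singleton_iff]
      ext e
      simp only [Finset.notMem_empty, iff_false]
      intro he
      induction e using Sym2.ind with
      | _ x y =>
        exact absurd (hM.2 _ he x (Sym2.mem_mk_left x y)) (Finset.notMem_empty x)
    calc (msetIn G ∅).ncard ≤ ({(∅ : Finset (Sym2 V))} : Set (Finset (Sym2 V))).ncard :=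
          Set.ncard_le_ncard hsub (Set.finite_singleton _)
      _ = 1 := Set.ncard_singleton _
      _ ≤ Nat.fib (Finset.card ∅ + 1) := by simp
  · obtain ⟨v, hv, huniq⟩ := exists_leaf G hG S hS
    by_cases hex : ∃ w ∈ S, G.Adj v w
    · obtain ⟨w, hwS, hadj⟩ := hex
      have hwv : w ≠ v := hadj.ne'
      set e0 : Sym2 V := s(v, w) with he0def
      -- split
      have hsplit : msetIn G S ⊆ msetIn G (S.erase v) ∪
          ((fun M => insert e0 M) '' msetIn G ((S.erase v).erase w)) := by
        intro M hM
        by_cases he0 : e0 ∈ M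
        · right
          refine ⟨M.erase e0, ⟨⟨fun e he => hM.1.1 e (Finset.mem_of_mem_erase he),
            fun e he f hf hne x => hM.1.2 e (Finset.mem_of_mem_erase he) f
              (Finset.mem_of_mem_erase hf) hne x⟩, ?_⟩, Finset.insert_erase he0⟩
          intro e he x hx
          have heM : e ∈ M := Finset.mem_of_mem_erase he
          have hne : e ≠ e0 := Finset.ne_of_mem_erase he
          have hxS : x ∈ S := hM.2 e heM x hx
          have hxv : x ≠ v := by
            rintro rfl
            exact hM.1.2 e heM e0 he0 hne x ⟨hx, Sym2.mem_mk_left _ _⟩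
          have hxw : x ≠ w := by
            rintro rfl
            exact hM.1.2 e heM e0 he0 hne x ⟨hx, Sym2.mem_mk_right _ _⟩
          exact Finset.mem_erase.mpr ⟨hxw, Finset.mem_erase.mpr ⟨hxv, hxS⟩⟩
        · left
          refine ⟨hM.1, ?_⟩
          intro e he x hx
          refine Finset.mem_erase.mpr ⟨?_, hM.2 e he x hx⟩
          rintro rfl
          obtain ⟨y, rfl⟩ := Sym2.mem_iff_exists.mp hx
          have hadjy : G.Adj x y := (G.mem_edgeSet).mp (hM.1.1 _ he)
          have hyS : y ∈ S := hM.2 _ he y (Sym2.mem_mk_right x y)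
          have hyw : y = w := huniq y hyS w hwS hadjy hadj
          exact he0 (by rw [he0def, ← hyw]; exact he)
      have hwS' : w ∈ S.erase v := Finset.mem_erase.mpr ⟨hwv, hwS⟩
      have hsub1 : S.erase v ⊂ S := Finset.erase_ssubset hv
      have hsub2 : (S.erase v).erase w ⊂ S :=
        (Finset.erase_ssubset hwS').trans hsub1
      have h1 := ih _ hsub1
      have h2 := ih _ hsub2
      have hc1 : (S.erase v).card = S.card - 1 := Finset.card_erase_of_mem hv
      have hc2 : ((S.erase v).erase w).card = S.card - 2 := by
        rw [Finset.card_erase_of_mem hwS', hc1]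
        omega
      have hcard2 : 2 ≤ S.card := Finset.one_lt_card.mpr ⟨v, hv, w, hwS, hadj.ne⟩
      obtain ⟨m, hm⟩ : ∃ m, S.card = m + 2 := ⟨S.card - 2, by omega⟩
      calc (msetIn G S).ncard
          ≤ (msetIn G (S.erase v) ∪
            ((fun M => insert e0 M) '' msetIn G ((S.erase v).erase w))).ncard :=
            Set.ncard_le_ncard hsplit (Set.toFinite _)
        _ ≤ (msetIn G (S.erase v)).ncard +
            ((fun M => insert e0 M) '' msetIn G ((S.erase v).erase w)).ncard :=
            Set.ncard_union_le _ _
        _ ≤ (msetIn G (S.erase v)).ncard + (msetIn G ((S.erase v).erase w)).ncard := by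
            exact Nat.add_le_add_left (Set.ncard_image_le (Set.toFinite _)) _
        _ ≤ Nat.fib ((S.erase v).card + 1) + Nat.fib (((S.erase v).erase w).card + 1) :=
            Nat.add_le_add h1 h2
        _ ≤ Nat.fib (S.card + 1) := by
            rw [hc1, hc2, hm]
            have e1 : m + 2 - 1 + 1 = m + 2 := by omega
            have e2 : m + 2 - 2 + 1 = m + 1 := by omega
            rw [e1, e2]
            have h := Nat.fib_add_two (n := m + 1)
            have e3 : m + 1 + 2 = m + 3 := by omega
            have e4 : m + 1 + 1 = m + 2 := by omega
            rw [e3, e4] at h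
            have e5 : m + 2 + 1 = m + 3 := by omega
            rw [e5]
            omega
    · push_neg at hex
      have hsub : msetIn G S ⊆ msetIn G (S.erase v) := by
        intro M hM
        refine ⟨hM.1, ?_⟩
        intro e he x hx
        refine Finset.mem_erase.mpr ⟨?_, hM.2 e he x hx⟩
        rintro rfl
        obtain ⟨y, rfl⟩ := Sym2.mem_iff_exists.mp hx
        have hadjy : G.Adj x y := (G.mem_edgeSet).mp (hM.1.1 _ he)
        have hyS : y ∈ S := hM.2 _ he y (Sym2.mem_mk_right x y)
        exact hex y hyS hadjy
      have h1 := ih _ (Finset.erase_ssubset hv)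
      have hc1 : (S.erase v).card = S.card - 1 := Finset.card_erase_of_mem hv
      calc (msetIn G S).ncard ≤ (msetIn G (S.erase v)).ncard :=
            Set.ncard_le_ncard hsub (Set.toFinite _)
        _ ≤ Nat.fib ((S.erase v).card + 1) := h1
        _ ≤ Nat.fib (S.card + 1) := Nat.fib_mono (by omega)

/-- Let `G` be a finite rooted tree with `n ≥ 1` nodes, rooted at `u`, in which
every node has at most two children (so the root has at most `2` neighbors and
every other node has at most `3` neighbors). Then the number of matchings of
`G` containing no edge incident to the root `u` is at most `F n`, the `n`-th
Fibonacci number (with `F 1 = F 2 = 1`). -/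
theorem matchings_avoiding_root_le_fib {V : Type*} [Fintype V]
    (G : SimpleGraph V) (hT : G.IsTree) (u : V)
    (hroot : (G.neighborSet u).ncard ≤ 2)
    (hbin : ∀ v : V, v ≠ u → (G.neighborSet v).ncard ≤ 3)
    (n : ℕ) (hn : Fintype.card V = n) (hn1 : 1 ≤ n) :
    {M : Finset (Sym2 V) | IsMatchingSet G M ∧ ∀ e ∈ M, u ∉ e}.ncard ≤ Nat.fib n := by
  classical
  have hset : {M : Finset (Sym2 V) | IsMatchingSet G M ∧ ∀ e ∈ M, u ∉ e} =
      msetIn G (Finset.univ.erase u) := by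
    ext M
    simp only [Set.mem_setOf_eq, msetIn]
    constructor
    · rintro ⟨h1, h2⟩
      exact ⟨h1, fun e he x hx => Finset.mem_erase.mpr
        ⟨fun h => h2 e he (h ▸ hx), Finset.mem_univ x⟩⟩
    · rintro ⟨h1, h2⟩
      exact ⟨h1, fun e he hu => (Finset.mem_erase.mp (h2 e he u hu)).1 rfl⟩
  rw [hset]
  have hkey := msetIn_card_le G hT.IsAcyclic (Finset.univ.erase u)
  have hcard : (Finset.univ.erase u).card = n - 1 := by
    rw [Finset.card_erase_of_mem (Finset.mem_univ u), Finset.card_univ, hn]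
  rw [hcard] at hkey
  have : n - 1 + 1 = n := by omega
  rwa [this] at hkey
end

section
/- Let T be a finite rooted tree with n ≥ 1 nodes in which every node has at most two children (a rooted binary tree). Then the total number of matchings of T is at most F_{n+1}, the (n+1)-th Fibonacci number (with F_1 = F_2 = 1). -/
open SimpleGraph

/-- In a finite acyclic graph with an edge, there is a vertex with exactly one
neighbor. -/
lemma exists_leaf_aux {V : Type*} [Fintype V] (H : SimpleGraph V) (hH : H.IsAcyclic)
    {a b : V} (hab : H.Adj a b) :
    ∃ v w, H.Adj v w ∧ ∀ x, H.Adj v x → x = w := by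
  classical
  set S : Set ℕ := {n | ∃ (x y : V) (p : H.Walk x y), p.IsPath ∧ p.length = n} with hS
  have hne : 1 ∈ S := ⟨a, b, hab.toWalk, by simp [Walk.isPath_def, hab.ne], rfl⟩
  have hbdd : BddAbove S := by
    refine ⟨Fintype.card V, ?_⟩
    rintro n ⟨x, y, p, hp, rfl⟩
    exact hp.length_lt.le
  have hmem := Nat.sSup_mem ⟨1, hne⟩ hbdd
  obtain ⟨x, y, p, hp, hlen⟩ := hmem
  have h1 : 1 ≤ sSup S := le_csSup hbdd hne
  cases p with
  | nil => simp at hlen; omega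
  | cons h p' =>
    rename_i w
    refine ⟨x, w, h, fun z hz => ?_⟩
    by_contra hzw
    rcases (Walk.cons_isPath_iff _ _).1 hp with ⟨hp', hxs⟩
    by_cases hmemz : z ∈ p'.support
    · -- two distinct paths from x to z, contradiction with acyclicity
      have htu : (p'.takeUntil z hmemz).IsPath := hp'.takeUntil hmemz
      have hx2 : x ∉ (p'.takeUntil z hmemz).support :=
        fun hc => hxs (Walk.support_takeUntil_subset _ hmemz hc)
      have hpath2 : (Walk.cons h (p'.takeUntil z hmemz)).IsPath := htu.cons hx2
      have hpath1 : hz.toWalk.IsPath := by simp [Walk.isPath_def, hz.ne]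
      have := hH.path_unique ⟨hz.toWalk, hpath1⟩ ⟨Walk.cons h (p'.takeUntil z hmemz), hpath2⟩
      have hlen' : hz.toWalk.length = (Walk.cons h (p'.takeUntil z hmemz)).length := by
        rw [show hz.toWalk = (⟨hz.toWalk, hpath1⟩ : H.Path x z).1 from rfl, this]
      simp [Walk.length_cons] at hlen'
      exact hzw hlen'.symm
    · -- extend the path, contradiction with maximality
      have hzx : z ∉ (Walk.cons h p').support := by
        rw [Walk.support_cons]
        simp only [List.mem_cons]
        push_neg
        exact ⟨fun hc => H.irrefl (hc ▸ hz), hmemz⟩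
      have hext : (Walk.cons hz.symm (Walk.cons h p')).IsPath := hp.cons hzx
      have : (Walk.cons hz.symm (Walk.cons h p')).length ∈ S :=
        ⟨z, y, _, hext, rfl⟩
      have hle := le_csSup hbdd this
      simp [Walk.length_cons] at hle hlen
      omega

/-- The set of matchings of `G` all of whose endpoints lie in `s`. -/
def MSet {V : Type*} (G : SimpleGraph V) (s : Finset V) : Set (Finset (Sym2 V)) :=
  {M | IsMatchingSet G M ∧ ∀ e ∈ M, ∀ v ∈ e, v ∈ s}

lemma matchingSet_subset {V : Type*} {G : SimpleGraph V} {M M' : Finset (Sym2 V)}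
    (h : IsMatchingSet G M) (hsub : M' ⊆ M) : IsMatchingSet G M' :=
  ⟨fun e he => h.1 e (hsub he),
   fun e he f hf hef v hv => h.2 e (hsub he) f (hsub hf) hef v hv⟩

lemma key_count {V : Type*} [Fintype V] [DecidableEq V] (G : SimpleGraph V)
    (hG : G.IsAcyclic) : ∀ (k : ℕ) (s : Finset V), s.card = k →
    (MSet G s).ncard ≤ Nat.fib (k + 1) := by
  intro k
  induction k using Nat.strong_induction_on with
  | _ k IH =>
    intro s hs
    by_cases hedge : ∃ v w, G.Adj v w ∧ v ∈ s ∧ w ∈ s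
    · -- restricted graph H
      obtain ⟨a0, b0, hab0, ha0, hb0⟩ := hedge
      set H : SimpleGraph V :=
        { Adj := fun x y => G.Adj x y ∧ x ∈ s ∧ y ∈ s,
          symm := ⟨fun x y ⟨h1, h2, h3⟩ => ⟨h1.symm, h3, h2⟩⟩,
          loopless := ⟨fun x ⟨h1, _, _⟩ => G.irrefl h1⟩ } with hHdef
      have hHle : H ≤ G := fun x y h => h.1
      have hHac : H.IsAcyclic := by
        intro v c hc
        exact hG (c.mapLe hHle) ((Walk.mapLe_isCycle hHle).2 hc)
      obtain ⟨v, w, hvw, hleaf⟩ := exists_leaf_aux H hHac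
        (show H.Adj a0 b0 from ⟨hab0, ha0, hb0⟩)
      obtain ⟨hGvw, hvs, hws⟩ := hvw
      have hvne : v ≠ w := hGvw.ne
      -- k ≥ 2
      obtain ⟨m, rfl⟩ : ∃ m, k = m + 2 := by
        have h2 : 2 ≤ s.card := Finset.one_lt_card.2 ⟨v, hvs, w, hws, hvne⟩
        exact ⟨k - 2, by omega⟩
      have hw_erase : w ∈ s.erase v := Finset.mem_erase.2 ⟨hvne.symm, hws⟩
      have hcard1 : (s.erase v).card = m + 1 := by
        rw [Finset.card_erase_of_mem hvs, hs]
        omega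
      have hcard2 : ((s.erase v).erase w).card = m := by
        rw [Finset.card_erase_of_mem hw_erase, hcard1]
        omega
      -- split
      set A : Set (Finset (Sym2 V)) := {M ∈ MSet G s | s(v, w) ∉ M} with hA
      set B : Set (Finset (Sym2 V)) := {M ∈ MSet G s | s(v, w) ∈ M} with hB
      have hunion : MSet G s ⊆ A ∪ B := by
        intro M hM
        by_cases h : s(v, w) ∈ M
        · exact Or.inr ⟨hM, h⟩
        · exact Or.inl ⟨hM, h⟩
      -- edges in M containing v must equal s(v,w)
      have hvedge : ∀ M ∈ MSet G s, ∀ e ∈ M, v ∈ e → e = s(v, w) := by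
        intro M hM e he hv
        obtain ⟨y, rfl⟩ := Sym2.mem_iff_exists.mp hv
        have hadj : G.Adj v y := (SimpleGraph.mem_edgeSet G).1 (hM.1.1 _ he)
        have hys : y ∈ s := hM.2 _ he y (Sym2.mem_mk_right v y)
        have : y = w := hleaf y ⟨hadj, hvs, hys⟩
        rw [this]
      have hAsub : A ⊆ MSet G (s.erase v) := by
        rintro M ⟨⟨hM, hMs⟩, hnot⟩
        refine ⟨hM, fun e he x hx => Finset.mem_erase.2 ⟨?_, hMs e he x hx⟩⟩
        rintro rfl
        exact hnot (by rw [← hvedge M ⟨hM, hMs⟩ e he hx]; exact he)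
      set t : Finset V := (s.erase v).erase w with ht
      have hBmap : ∀ M ∈ B, M.erase s(v, w) ∈ MSet G t := by
        rintro M ⟨⟨hM, hMs⟩, hmem⟩
        refine ⟨matchingSet_subset hM (Finset.erase_subset _ _), ?_⟩
        intro e he x hx
        have he' : e ∈ M := Finset.mem_of_mem_erase he
        have hnee : e ≠ s(v, w) := Finset.ne_of_mem_erase he
        have hxs : x ∈ s := hMs e he' x hx
        have hxvw : ¬(x ∈ e ∧ x ∈ s(v, w)) := hM.2 e he' _ hmem hnee x
        have hxv : x ≠ v := by
          rintro rfl; exact hxvw ⟨hx, Sym2.mem_mk_left _ _⟩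
        have hxw : x ≠ w := by
          rintro rfl; exact hxvw ⟨hx, Sym2.mem_mk_right _ _⟩
        exact Finset.mem_erase.2 ⟨hxw, Finset.mem_erase.2 ⟨hxv, hxs⟩⟩
      have hinj : Set.InjOn (fun M => M.erase s(v, w)) B := by
        rintro M₁ h₁ M₂ h₂ heq
        have := congrArg (insert s(v, w)) heq
        simpa [Finset.insert_erase h₁.2, Finset.insert_erase h₂.2] using this
      have hcA : A.ncard ≤ Nat.fib (m + 2) :=
        le_trans (Set.ncard_le_ncard hAsub (Set.toFinite _))
          (IH (m + 1) (by omega) _ hcard1)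
      have hcB : B.ncard ≤ Nat.fib (m + 1) :=
        le_trans (Set.ncard_le_ncard_of_injOn _ hBmap hinj (Set.toFinite _))
          (IH m (by omega) t hcard2)
      calc (MSet G s).ncard ≤ (A ∪ B).ncard :=
            Set.ncard_le_ncard hunion (Set.toFinite _)
        _ ≤ A.ncard + B.ncard := Set.ncard_union_le A B
        _ ≤ Nat.fib (m + 2) + Nat.fib (m + 1) := Nat.add_le_add hcA hcB
        _ = Nat.fib (m + 2 + 1) := by
            rw [Nat.add_comm (Nat.fib (m + 2))]
            exact (Nat.fib_add_two (n := m + 1)).symm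
    · -- no edge inside s : only the empty matching
      have hsub : MSet G s ⊆ {∅} := by
        intro M ⟨hM, hMs⟩
        simp only [Set.mem_singleton_iff]
        by_contra hMne
        obtain ⟨e, he⟩ := Finset.nonempty_iff_ne_empty.2 hMne
        have heG := hM.1 e he
        induction e with
        | _ x y =>
          rw [SimpleGraph.mem_edgeSet] at heG
          exact hedge ⟨x, y, heG, hMs _ he x (Sym2.mem_mk_left x y),
            hMs _ he y (Sym2.mem_mk_right x y)⟩
      calc (MSet G s).ncard ≤ ({∅} : Set (Finset (Sym2 V))).ncard :=
            Set.ncard_le_ncard hsub (Set.finite_singleton _)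
        _ = 1 := Set.ncard_singleton _
        _ ≤ Nat.fib (k + 1) := Nat.fib_pos.2 (Nat.succ_pos k)

/-- Let `G` be a finite rooted tree with `n ≥ 1` nodes, rooted at `u`, in which
every node has at most two children (so the root has at most `2` neighbors and
every other node has at most `3` neighbors). Then the total number of matchings
of `G` is at most `F (n+1)`, the `(n+1)`-th Fibonacci number
(with `F 1 = F 2 = 1`). -/
theorem matchings_le_fib_succ {V : Type*} [Fintype V]
    (G : SimpleGraph V) (hT : G.IsTree) (u : V)
    (hroot : (G.neighborSet u).ncard ≤ 2)
    (hbin : ∀ v : V, v ≠ u → (G.neighborSet v).ncard ≤ 3)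
    (n : ℕ) (hn : Fintype.card V = n) (hn1 : 1 ≤ n) :
    {M : Finset (Sym2 V) | IsMatchingSet G M}.ncard ≤ Nat.fib (n + 1) := by
  classical
  have hset : {M : Finset (Sym2 V) | IsMatchingSet G M} = MSet G Finset.univ := by
    ext M
    simp [MSet]
  rw [hset]
  exact key_count G hT.IsAcyclic n Finset.univ (by simp [hn])
end

section
/- Let T_init and T_final be triangulations of the same convex polygon, and let e_1 and e_2 be two distinct free-diagonals of T_init with respect to T_final. Then e_1 and e_2 are independent in T_init, i.e., they do not lie on a common triangle of T_init. -/
open Finset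

/-- Two vertices of the convex `m`-gon are adjacent in the cyclic order. -/
def PolyAdj (m : ℕ) (a b : Fin m) : Prop :=
  (a.val + 1) % m = b.val ∨ (b.val + 1) % m = a.val

/-- `e` is a diagonal of the convex `m`-gon: an unordered pair of distinct,
non-adjacent vertices. -/
def IsDiagonal (m : ℕ) (e : Finset (Fin m)) : Prop :=
  ∃ a b : Fin m, a ≠ b ∧ ¬ PolyAdj m a b ∧ e = {a, b}

/-- The cyclic distance from `a` to `x`, going forwards in the cyclic order. -/
def cycDist (m : ℕ) (a x : Fin m) : ℕ := (x.val + m - a.val) % m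

/-- `x` lies strictly between `a` and `b` in the cyclic order. -/
def CycBtw (m : ℕ) (a x b : Fin m) : Prop :=
  0 < cycDist m a x ∧ cycDist m a x < cycDist m a b

/-- Two chords cross: their endpoints strictly interleave in the cyclic order. -/
def Cross (m : ℕ) (e₁ e₂ : Finset (Fin m)) : Prop :=
  ∃ a b c d : Fin m, e₁ = {a, b} ∧ e₂ = {c, d} ∧ CycBtw m a c b ∧ CycBtw m b d a

/-- A triangulation of the convex `m`-gon: a maximal set of pairwise
non-crossing diagonals. -/
structure Triangulation (m : ℕ) where
  diagonals : Finset (Finset (Fin m))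
  isDiagonal : ∀ e ∈ diagonals, IsDiagonal m e
  noncross : ∀ e₁ ∈ diagonals, ∀ e₂ ∈ diagonals, ¬ Cross m e₁ e₂
  maximal : ∀ e, IsDiagonal m e → (∀ e' ∈ diagonals, ¬ Cross m e e') → e ∈ diagonals

/-- `e` is a side in the triangulation `T`: either an edge of the polygon
(between cyclically adjacent vertices) or a diagonal of `T`. -/
def IsSide (m : ℕ) (T : Triangulation m) (e : Finset (Fin m)) : Prop :=
  (∃ a b : Fin m, PolyAdj m a b ∧ e = {a, b}) ∨ e ∈ T.diagonals

/-- `t` is a triangle of the triangulation `T`: three distinct vertices each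
pair of which forms a side of `T`. -/
def IsTriangle (m : ℕ) (T : Triangulation m) (t : Finset (Fin m)) : Prop :=
  ∃ a b c : Fin m, a ≠ b ∧ a ≠ c ∧ b ≠ c ∧ t = {a, b, c} ∧
    IsSide m T {a, b} ∧ IsSide m T {a, c} ∧ IsSide m T {b, c}

/-- Two diagonals of `T` are neighbors if they both belong to `T` and lie on a
common triangle of `T`; they are independent otherwise. -/
def Neighbor (m : ℕ) (T : Triangulation m) (e₁ e₂ : Finset (Fin m)) : Prop :=
  e₁ ∈ T.diagonals ∧ e₂ ∈ T.diagonals ∧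
    ∃ t, IsTriangle m T t ∧ e₁ ⊆ t ∧ e₂ ⊆ t

/-- `T'` is obtained from `T` by flipping the diagonal `e`, which removes `e`
and creates the new diagonal `e'` (necessarily the opposite diagonal of the
quadrilateral formed by the two triangles of `T` containing `e`, since `T'` is
again a triangulation). -/
def IsFlip (m : ℕ) (T T' : Triangulation m) (e e' : Finset (Fin m)) : Prop :=
  e ∈ T.diagonals ∧ e' ∉ T.diagonals ∧
    T'.diagonals = insert e' (T.diagonals.erase e)

/-- `Ts 0, Ts 1, …, Ts r` is a sequence of triangulations in which `Ts (i+1)`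
is obtained from `Ts i` by performing the flip `F i`, which removes the
diagonal `(F i).1` and creates the diagonal `(F i).2`. -/
def IsFlipSeq (m r : ℕ) (F : ℕ → Finset (Fin m) × Finset (Fin m))
    (Ts : ℕ → Triangulation m) : Prop :=
  ∀ i < r, IsFlip m (Ts i) (Ts (i + 1)) (F i).1 (F i).2

/-- The flip distance between two triangulations: the minimum length of a flip
sequence transforming one into the other. -/
noncomputable def FlipDist (m : ℕ) (T T' : Triangulation m) : ℕ :=
  sInf {r | ∃ F Ts, IsFlipSeq m r F Ts ∧ Ts 0 = T ∧ Ts r = T'}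

/-- `e` is a free-diagonal of `T` with respect to `Tfinal`: flipping `e` in `T`
creates a diagonal belonging to `Tfinal`. -/
def FreeDiagonal (m : ℕ) (T Tfinal : Triangulation m) (e : Finset (Fin m)) : Prop :=
  ∃ T' e', IsFlip m T T' e e' ∧ e' ∈ Tfinal.diagonals

/-- Arc of the DAG `D_F` associated to the flip sequence `F` with triangulation
sequence `Ts`: there is an arc from flip `i` to flip `j` when `i < j` and the
diagonal created by flip `i` is a neighbor of the diagonal removed by flip `j`
in the triangulation `Ts j` in which flip `j` is performed. -/
def Arc (m r : ℕ) (F : ℕ → Finset (Fin m) × Finset (Fin m))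
    (Ts : ℕ → Triangulation m) (i j : ℕ) : Prop :=
  i < j ∧ j < r ∧ Neighbor m (Ts j) (F i).2 (F j).1


/-! ### Auxiliary lemmas -/

lemma aux_mod_sub (m a b : ℕ) (ha : a < m) (hb : b < m) :
    (b + m - a) % m = if a ≤ b then b - a else b + m - a := by
  rcases le_or_gt a b with h | h
  · rw [if_pos h]
    have h2 : b + m - a = (b - a) + m := by omega
    rw [h2, Nat.add_mod_right]
    exact Nat.mod_eq_of_lt (by omega)
  · rw [if_neg (not_le.mpr h)]
    exact Nat.mod_eq_of_lt (by omega)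

lemma aux_cycBtw_iff (m : ℕ) (u w v : Fin m) :
    CycBtw m u w v ↔ ((u.1 < w.1 ∧ w.1 < v.1) ∨ (v.1 < u.1 ∧ u.1 < w.1) ∨
      (w.1 < v.1 ∧ v.1 < u.1)) := by
  have hu := u.isLt; have hw := w.isLt; have hv := v.isLt
  unfold CycBtw cycDist
  rw [aux_mod_sub m u.1 w.1 hu hw, aux_mod_sub m u.1 v.1 hu hv]
  split_ifs <;> omega

lemma aux_pair_eq {α : Type*} [DecidableEq α] {a b c d : α}
    (h : ({a, b} : Finset α) = {c, d}) (hab : a ≠ b) :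
    (c = a ∧ d = b) ∨ (c = b ∧ d = a) := by
  have hc : c ∈ ({a, b} : Finset α) := by rw [h]; simp
  have hd : d ∈ ({a, b} : Finset α) := by rw [h]; simp
  have ha : a ∈ ({c, d} : Finset α) := by rw [← h]; simp
  have hb : b ∈ ({c, d} : Finset α) := by rw [← h]; simp
  simp only [Finset.mem_insert, Finset.mem_singleton] at hc hd ha hb
  rcases hc with rfl | rfl <;> rcases hd with rfl | rfl
  · rcases hb with rfl | rfl <;> exact absurd rfl hab
  · exact Or.inl ⟨rfl, rfl⟩
  · exact Or.inr ⟨rfl, rfl⟩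
  · rcases ha with rfl | rfl <;> exact absurd rfl hab

lemma aux_cross_of {m : ℕ} {p q u v : Fin m} (h1 : CycBtw m p u q)
    (h2 : CycBtw m q v p) : Cross m {p, q} {u, v} :=
  ⟨p, q, u, v, rfl, rfl, h1, h2⟩

lemma aux_cross_pair {m : ℕ} {f : Finset (Fin m)} {x y : Fin m} (hxy : x ≠ y)
    (h : Cross m f {x, y}) :
    ∃ p q, f = {p, q} ∧ CycBtw m p x q ∧ CycBtw m q y p := by
  obtain ⟨p, q, c, d, hf, hcd, h1, h2⟩ := h
  rcases aux_pair_eq hcd hxy with ⟨rfl, rfl⟩ | ⟨rfl, rfl⟩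
  · exact ⟨p, q, hf, h1, h2⟩
  · exact ⟨q, p, by rw [hf, Finset.pair_comm], h2, h1⟩

lemma aux_not_cross_edge (m : ℕ) (hm : 3 ≤ m) {u v : Fin m}
    (h : PolyAdj m u v) (g : Finset (Fin m)) : ¬ Cross m g {u, v} := by
  rintro ⟨p, q, c, d, hg, hcd, h1, h2⟩
  have huv : u ≠ v := by
    rintro rfl
    have hu := u.isLt
    rcases h with h' | h' <;>
    · rcases Nat.lt_or_ge (u.1 + 1) m with hl | hl
      · rw [Nat.mod_eq_of_lt hl] at h'; omega
      · have he : u.1 + 1 = m := by omega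
        rw [he, Nat.mod_self] at h'; omega
  have hadj : PolyAdj m c d := by
    rcases aux_pair_eq hcd huv with ⟨rfl, rfl⟩ | ⟨rfl, rfl⟩
    · exact h
    · rcases h with h' | h'
      · exact Or.inr h'
      · exact Or.inl h'
  rw [aux_cycBtw_iff] at h1 h2
  have hc := c.isLt; have hd := d.isLt; have hp := p.isLt; have hq := q.isLt
  rcases hadj with h' | h'
  · rcases Nat.lt_or_ge (c.1 + 1) m with hl | hl
    · rw [Nat.mod_eq_of_lt hl] at h'; omega
    · have he : c.1 + 1 = m := by omega
      rw [he, Nat.mod_self] at h'; omega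
  · rcases Nat.lt_or_ge (d.1 + 1) m with hl | hl
    · rw [Nat.mod_eq_of_lt hl] at h'; omega
    · have he : d.1 + 1 = m := by omega
      rw [he, Nat.mod_self] at h'; omega

lemma aux_natA (P Q X Y Z : ℕ)
    (h1 : (P < X ∧ X < Q) ∨ (Q < P ∧ P < X) ∨ (X < Q ∧ Q < P))
    (h2 : (Q < Y ∧ Y < P) ∨ (P < Q ∧ Q < Y) ∨ (Y < P ∧ P < Q))
    (n1b : ¬(((P < Z ∧ Z < Q) ∨ (Q < P ∧ P < Z) ∨ (Z < Q ∧ Q < P)) ∧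
      ((Q < Y ∧ Y < P) ∨ (P < Q ∧ Q < Y) ∨ (Y < P ∧ P < Q))))
    (n2a : ¬(((P < X ∧ X < Q) ∨ (Q < P ∧ P < X) ∨ (X < Q ∧ Q < P)) ∧
      ((Q < Z ∧ Z < P) ∨ (P < Q ∧ Q < Z) ∨ (Z < P ∧ P < Q)))) :
    Z = P ∨ Z = Q := by omega

lemma aux_natC (P Q U V X Y Z : ℕ)
    (h1 : (P < X ∧ X < Q) ∨ (Q < P ∧ P < X) ∨ (X < Q ∧ Q < P))
    (h2 : (Q < Y ∧ Y < P) ∨ (P < Q ∧ Q < Y) ∨ (Y < P ∧ P < Q))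
    (h3 : (U < Y ∧ Y < V) ∨ (V < U ∧ U < Y) ∨ (Y < V ∧ V < U))
    (h4 : (V < Z ∧ Z < U) ∨ (U < V ∧ V < Z) ∨ (Z < U ∧ U < V))
    (hZ : Z = P ∨ Z = Q) (hX : X = U ∨ X = V) :
    (((P < U ∧ U < Q) ∨ (Q < P ∧ P < U) ∨ (U < Q ∧ Q < P)) ∧
      ((Q < V ∧ V < P) ∨ (P < Q ∧ Q < V) ∨ (V < P ∧ P < Q))) ∨
    (((P < V ∧ V < Q) ∨ (Q < P ∧ P < V) ∨ (V < Q ∧ Q < P)) ∧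
      ((Q < U ∧ U < P) ∨ (P < Q ∧ Q < U) ∨ (U < P ∧ P < Q))) := by
  omega

lemma aux_core (m : ℕ) {x y z : Fin m} {f₁ f₂ : Finset (Fin m)}
    (hxy : x ≠ y) (hxz : x ≠ z) (hyz : y ≠ z)
    (c1 : Cross m f₁ {x, y}) (n1 : ¬ Cross m f₁ {y, z}) (n2 : ¬ Cross m f₁ {x, z})
    (c2 : Cross m f₂ {y, z}) (n3 : ¬ Cross m f₂ {x, y}) (n4 : ¬ Cross m f₂ {x, z}) :
    Cross m f₁ f₂ := by
  obtain ⟨p, q, hf₁, h1, h2⟩ := aux_cross_pair hxy c1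
  obtain ⟨u, v, hf₂, h3, h4⟩ := aux_cross_pair hyz c2
  subst hf₁; subst hf₂
  have n1b : ¬ (CycBtw m p z q ∧ CycBtw m q y p) :=
    fun ⟨ha, hb⟩ => n1 (by rw [Finset.pair_comm y z]; exact aux_cross_of ha hb)
  have n2a : ¬ (CycBtw m p x q ∧ CycBtw m q z p) :=
    fun ⟨ha, hb⟩ => n2 (aux_cross_of ha hb)
  have n3b : ¬ (CycBtw m u y v ∧ CycBtw m v x u) :=
    fun ⟨ha, hb⟩ => n3 (by rw [Finset.pair_comm x y]; exact aux_cross_of ha hb)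
  have n4a : ¬ (CycBtw m u x v ∧ CycBtw m v z u) :=
    fun ⟨ha, hb⟩ => n4 (aux_cross_of ha hb)
  rw [aux_cycBtw_iff] at h1 h2 h3 h4
  simp only [aux_cycBtw_iff] at n1b n2a n3b n4a
  have hZ : z.1 = p.1 ∨ z.1 = q.1 := aux_natA p.1 q.1 x.1 y.1 z.1 h1 h2 n1b n2a
  have hX : x.1 = u.1 ∨ x.1 = v.1 := aux_natA u.1 v.1 y.1 z.1 x.1 h3 h4 n4a n3b
  rcases aux_natC p.1 q.1 u.1 v.1 x.1 y.1 z.1 h1 h2 h3 h4 hZ hX with ⟨g1, g2⟩ | ⟨g1, g2⟩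
  · exact aux_cross_of ((aux_cycBtw_iff m p u q).mpr g1) ((aux_cycBtw_iff m q v p).mpr g2)
  · rw [Finset.pair_comm u v]
    exact aux_cross_of ((aux_cycBtw_iff m p v q).mpr g1) ((aux_cycBtw_iff m q u p).mpr g2)

lemma aux_key (m : ℕ) (hm : 3 ≤ m) (Tinit Tfinal : Triangulation m) {x y z : Fin m}
    (hxy : x ≠ y) (hxz : x ≠ z) (hyz : y ≠ z)
    (he₁ : ({x, y} : Finset (Fin m)) ∈ Tinit.diagonals)
    (he₂ : ({y, z} : Finset (Fin m)) ∈ Tinit.diagonals)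
    (hs : IsSide m Tinit {x, z})
    (h₁ : FreeDiagonal m Tinit Tfinal {x, y})
    (h₂ : FreeDiagonal m Tinit Tfinal {y, z}) : False := by
  obtain ⟨T₁, f₁, ⟨-, hf1n, hT₁⟩, hf1F⟩ := h₁
  obtain ⟨T₂, f₂, ⟨-, hf2n, hT₂⟩, hf2F⟩ := h₂
  have hfm₁ : f₁ ∈ T₁.diagonals := by rw [hT₁]; exact Finset.mem_insert_self _ _
  have hfm₂ : f₂ ∈ T₂.diagonals := by rw [hT₂]; exact Finset.mem_insert_self _ _
  have hA₁ : ∀ g ∈ Tinit.diagonals, g ≠ ({x, y} : Finset (Fin m)) → ¬ Cross m f₁ g := by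
    intro g hg hgne
    have hg' : g ∈ T₁.diagonals := by
      rw [hT₁]; exact Finset.mem_insert_of_mem (Finset.mem_erase.mpr ⟨hgne, hg⟩)
    exact T₁.noncross _ hfm₁ _ hg'
  have hA₂ : ∀ g ∈ Tinit.diagonals, g ≠ ({y, z} : Finset (Fin m)) → ¬ Cross m f₂ g := by
    intro g hg hgne
    have hg' : g ∈ T₂.diagonals := by
      rw [hT₂]; exact Finset.mem_insert_of_mem (Finset.mem_erase.mpr ⟨hgne, hg⟩)
    exact T₂.noncross _ hfm₂ _ hg'
  have hc₁ : Cross m f₁ {x, y} := by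
    have hex : ∃ g ∈ Tinit.diagonals, Cross m f₁ g := by
      by_contra hno
      push_neg at hno
      exact hf1n (Tinit.maximal f₁ (Tfinal.isDiagonal _ hf1F) hno)
    obtain ⟨g, hg, hcr⟩ := hex
    have hgeq : g = ({x, y} : Finset (Fin m)) := by
      by_contra hne'
      exact hA₁ g hg hne' hcr
    rwa [hgeq] at hcr
  have hc₂ : Cross m f₂ {y, z} := by
    have hex : ∃ g ∈ Tinit.diagonals, Cross m f₂ g := by
      by_contra hno
      push_neg at hno
      exact hf2n (Tinit.maximal f₂ (Tfinal.isDiagonal _ hf2F) hno)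
    obtain ⟨g, hg, hcr⟩ := hex
    have hgeq : g = ({y, z} : Finset (Fin m)) := by
      by_contra hne'
      exact hA₂ g hg hne' hcr
    rwa [hgeq] at hcr
  have hne12 : ({x, y} : Finset (Fin m)) ≠ {y, z} := by
    intro h
    have hz : z ∈ ({x, y} : Finset (Fin m)) := by rw [h]; simp
    simp only [Finset.mem_insert, Finset.mem_singleton] at hz
    rcases hz with h' | h'
    · exact hxz h'.symm
    · exact hyz h'.symm
  have hnexz₁ : ({x, z} : Finset (Fin m)) ≠ {x, y} := by
    intro h
    have hz : z ∈ ({x, y} : Finset (Fin m)) := by rw [← h]; simp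
    simp only [Finset.mem_insert, Finset.mem_singleton] at hz
    rcases hz with h' | h'
    · exact hxz h'.symm
    · exact hyz h'.symm
  have hnexz₂ : ({x, z} : Finset (Fin m)) ≠ {y, z} := by
    intro h
    have hx : x ∈ ({y, z} : Finset (Fin m)) := by rw [← h]; simp
    simp only [Finset.mem_insert, Finset.mem_singleton] at hx
    rcases hx with h' | h'
    · exact hxy h'
    · exact hxz h'
  have n1 : ¬ Cross m f₁ {y, z} := hA₁ _ he₂ hne12.symm
  have n3 : ¬ Cross m f₂ {x, y} := hA₂ _ he₁ hne12
  have n2 : ¬ Cross m f₁ {x, z} := by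
    rcases hs with ⟨a, b, hadj, heq⟩ | hmem
    · rw [heq]; exact aux_not_cross_edge m hm hadj f₁
    · exact hA₁ _ hmem hnexz₁
  have n4 : ¬ Cross m f₂ {x, z} := by
    rcases hs with ⟨a, b, hadj, heq⟩ | hmem
    · rw [heq]; exact aux_not_cross_edge m hm hadj f₂
    · exact hA₂ _ hmem hnexz₂
  exact Tfinal.noncross _ hf1F _ hf2F (aux_core m hxy hxz hyz hc₁ n1 n2 hc₂ n3 n4)

lemma aux_pairs_of_triangle {α : Type*} [DecidableEq α] {a b c a₁ b₁ : α}
    (h : ({a₁, b₁} : Finset α) ⊆ {a, b, c}) (hne : a₁ ≠ b₁) :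
    ({a₁, b₁} : Finset α) = {a, b} ∨ ({a₁, b₁} : Finset α) = {a, c} ∨
      ({a₁, b₁} : Finset α) = {b, c} := by
  have h1 : a₁ ∈ ({a, b, c} : Finset α) := h (by simp)
  have h2 : b₁ ∈ ({a, b, c} : Finset α) := h (by simp)
  simp only [Finset.mem_insert, Finset.mem_singleton] at h1 h2
  rcases h1 with rfl | rfl | rfl <;> rcases h2 with rfl | rfl | rfl
  · exact absurd rfl hne
  · exact Or.inl rfl
  · exact Or.inr (Or.inl rfl)
  · exact Or.inl (Finset.pair_comm _ _)
  · exact absurd rfl hne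
  · exact Or.inr (Or.inr rfl)
  · exact Or.inr (Or.inl (Finset.pair_comm _ _))
  · exact Or.inr (Or.inr (Finset.pair_comm _ _))
  · exact absurd rfl hne


/-- If `e₁` and `e₂` are two distinct free-diagonals of `Tinit` with respect to
`Tfinal`, then `e₁` and `e₂` are independent in `Tinit`, i.e. they do not lie
on a common triangle of `Tinit`. -/
theorem freeDiagonals_independent (m : ℕ) (hm : 3 ≤ m)
    (Tinit Tfinal : Triangulation m) (e₁ e₂ : Finset (Fin m))
    (h₁ : FreeDiagonal m Tinit Tfinal e₁) (h₂ : FreeDiagonal m Tinit Tfinal e₂)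
    (hne : e₁ ≠ e₂) :
    ¬ Neighbor m Tinit e₁ e₂ := by
  intro hN
  obtain ⟨he₁T, he₂T, t, ⟨a, b, c, hab, hac, hbc, ht, hsab, hsac, hsbc⟩, hs₁, hs₂⟩ := hN
  obtain ⟨a₁, b₁, hab₁, -, he₁⟩ := Tinit.isDiagonal e₁ he₁T
  obtain ⟨a₂, b₂, hab₂, -, he₂⟩ := Tinit.isDiagonal e₂ he₂T
  subst he₁; subst he₂; subst ht
  rcases aux_pairs_of_triangle hs₁ hab₁ with h1 | h1 | h1 <;>
    rcases aux_pairs_of_triangle hs₂ hab₂ with h2 | h2 | h2 <;>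
      rw [h1] at he₁T hne h₁ <;> rw [h2] at he₂T hne h₂
  · exact hne rfl
  · -- e₁ = {a,b}, e₂ = {a,c} : shared a, (x,y,z) = (b,a,c)
    rw [Finset.pair_comm a b] at he₁T h₁
    exact aux_key m hm Tinit Tfinal hab.symm hbc hac he₁T he₂T hsbc h₁ h₂
  · -- e₁ = {a,b}, e₂ = {b,c} : shared b, (x,y,z) = (a,b,c)
    exact aux_key m hm Tinit Tfinal hab hac hbc he₁T he₂T hsac h₁ h₂
  · -- e₁ = {a,c}, e₂ = {a,b} : shared a, (x,y,z) = (c,a,b)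
    rw [Finset.pair_comm a c] at he₁T h₁
    rw [Finset.pair_comm b c] at hsbc
    exact aux_key m hm Tinit Tfinal hac.symm hbc.symm hab he₁T he₂T hsbc h₁ h₂
  · exact hne rfl
  · -- e₁ = {a,c}, e₂ = {b,c} : shared c, (x,y,z) = (a,c,b)
    rw [Finset.pair_comm b c] at he₂T h₂
    exact aux_key m hm Tinit Tfinal hac hab hbc.symm he₁T he₂T hsab h₁ h₂
  · -- e₁ = {b,c}, e₂ = {a,b} : shared b, (x,y,z) = (c,b,a)
    rw [Finset.pair_comm b c] at he₁T h₁
    rw [Finset.pair_comm a b] at he₂T h₂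
    rw [Finset.pair_comm a c] at hsac
    exact aux_key m hm Tinit Tfinal hbc.symm hac.symm hab.symm he₁T he₂T hsac h₁ h₂
  · -- e₁ = {b,c}, e₂ = {a,c} : shared c, (x,y,z) = (b,c,a)
    rw [Finset.pair_comm a c] at he₂T h₂
    rw [Finset.pair_comm a b] at hsab
    exact aux_key m hm Tinit Tfinal hbc hab.symm hac.symm he₁T he₂T hsab h₁ h₂
  · exact hne rfl
end

section
/- Let T_init and T_final be triangulations of the same convex polygon sharing a diagonal e. Then every flip sequence of minimum length transforming T_init into T_final contains no flip whose underlying (removed) diagonal is e; consequently e is a diagonal of every intermediate triangulation along every shortest path from T_init to T_final. -/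
open Finset

open scoped Classical

section Basics
variable {m : ℕ}

lemma mod_small {t : ℕ} (hm : 0 < m) (h : t < 2*m) :
    t % m = if t < m then t else t - m := by
  split_ifs with h1
  · exact Nat.mod_eq_of_lt h1
  · rw [Nat.mod_eq_sub_mod (le_of_not_gt h1), Nat.mod_eq_of_lt (by omega)]

lemma pair_eq {α : Type*} [DecidableEq α] {a b c d : α}
    (h : ({a,b} : Finset α) = {c,d}) : (a = c ∧ b = d) ∨ (a = d ∧ b = c) := by
  have ha : a ∈ ({c,d} : Finset α) := by rw [← h]; simp
  have hb : b ∈ ({c,d} : Finset α) := by rw [← h]; simp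
  have hc : c ∈ ({a,b} : Finset α) := by rw [h]; simp
  have hd : d ∈ ({a,b} : Finset α) := by rw [h]; simp
  simp only [Finset.mem_insert, Finset.mem_singleton] at ha hb hc hd
  tauto

lemma mem_pair {α : Type*} [DecidableEq α] {a b c : α} :
    a ∈ ({b,c} : Finset α) ↔ a = b ∨ a = c := by simp

lemma cycDist_lt (hm : 0 < m) (a x : Fin m) : cycDist m a x < m :=
  Nat.mod_lt _ hm

lemma cycDist_eq (a x : Fin m) :
    cycDist m a x = if a.val ≤ x.val then x.val - a.val else x.val + m - a.val := by
  have hx := x.isLt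
  have ha := a.isLt
  have h0 : 0 < m := by omega
  unfold cycDist
  rw [mod_small h0 (by omega)]
  split_ifs <;> omega

lemma cycDist_self (a : Fin m) : cycDist m a a = 0 := by
  rw [cycDist_eq]; simp

lemma cycDist_inj {a x y : Fin m} (h : cycDist m a x = cycDist m a y) : x = y := by
  have hx := x.isLt; have hy := y.isLt; have ha := a.isLt
  rw [cycDist_eq, cycDist_eq] at h
  apply Fin.ext
  split_ifs at h <;> omega

lemma cycDist_eq_iff {a x y : Fin m} : x = y ↔ cycDist m a x = cycDist m a y :=
  ⟨fun h => by rw [h], cycDist_inj⟩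

lemma cycDist_base (a c x : Fin m) :
    cycDist m c x = if cycDist m a c ≤ cycDist m a x then cycDist m a x - cycDist m a c
      else cycDist m a x + m - cycDist m a c := by
  have hx := x.isLt; have ha := a.isLt; have hc := c.isLt
  rw [cycDist_eq, cycDist_eq, cycDist_eq]
  split_ifs <;> omega

lemma cycBtw_iff (a c x d : Fin m) :
    CycBtw m c x d ↔
      ((cycDist m a c < cycDist m a x ∧ cycDist m a x < cycDist m a d) ∨
       (cycDist m a d < cycDist m a c ∧ cycDist m a c < cycDist m a x) ∨
       (cycDist m a x < cycDist m a d ∧ cycDist m a d < cycDist m a c)) := by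
  have h0 : 0 < m := Fin.pos a
  have hx := cycDist_lt h0 a x
  have hc := cycDist_lt h0 a c
  have hd := cycDist_lt h0 a d
  unfold CycBtw
  rw [cycDist_base a c x, cycDist_base a c d]
  split_ifs <;> omega

lemma polyAdj_iff (a x y : Fin m) :
    PolyAdj m x y ↔
      (cycDist m a y = cycDist m a x + 1 ∨ cycDist m a x = cycDist m a y + 1 ∨
       (cycDist m a x = 0 ∧ cycDist m a y = m - 1) ∨
       (cycDist m a y = 0 ∧ cycDist m a x = m - 1)) := by
  have h0 : 0 < m := Fin.pos a
  have hx := x.isLt; have hy := y.isLt; have ha := a.isLt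
  unfold PolyAdj
  rw [mod_small h0 (by omega), mod_small h0 (by omega)]
  rw [cycDist_eq, cycDist_eq]
  constructor
  · intro h; split_ifs at h <;> split_ifs <;> omega
  · intro h; split_ifs at h <;> split_ifs <;> omega

lemma polyAdj_symm {x y : Fin m} (h : PolyAdj m x y) : PolyAdj m y x := Or.symm h

lemma cross_intro {x y c d : Fin m} (h1 : CycBtw m x c y) (h2 : CycBtw m y d x) :
    Cross m {x,y} {c,d} := ⟨x,y,c,d,rfl,rfl,h1,h2⟩

lemma cross_elim {e₁ e₂ : Finset (Fin m)} (h : Cross m e₁ e₂) {x y c d : Fin m}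
    (h1 : e₁ = {x,y}) (h2 : e₂ = {c,d}) :
    (CycBtw m x c y ∧ CycBtw m y d x) ∨ (CycBtw m x d y ∧ CycBtw m y c x) := by
  obtain ⟨p,q,u,v,hpq,huv,hb1,hb2⟩ := h
  rw [h1] at hpq; rw [h2] at huv
  rcases pair_eq hpq with ⟨hp,hq⟩|⟨hp,hq⟩ <;> rcases pair_eq huv with ⟨hu,hv⟩|⟨hu,hv⟩ <;>
    subst hp <;> subst hq <;> subst hu <;> subst hv <;> tauto

end Basics
section Tri
variable {m : ℕ}

lemma cross_symm {e₁ e₂ : Finset (Fin m)} (h : Cross m e₁ e₂) : Cross m e₂ e₁ := by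
  obtain ⟨x,y,c,d,rfl,rfl,h1,h2⟩ := h
  have h0 : 0 < m := Fin.pos x
  have hxx : cycDist m x x = 0 := cycDist_self x
  have b1 := cycDist_lt h0 x y; have b2 := cycDist_lt h0 x c; have b3 := cycDist_lt h0 x d
  rw [cycBtw_iff x] at h1 h2
  have : Cross m ({c,d} : Finset (Fin m)) {y,x} :=
    cross_intro (by rw [cycBtw_iff x]; omega) (by rw [cycBtw_iff x]; omega)
  rwa [Finset.pair_comm y x] at this

lemma not_cross_shared {e₁ e₂ : Finset (Fin m)} {t : Fin m}
    (h1 : t ∈ e₁) (h2 : t ∈ e₂) : ¬ Cross m e₁ e₂ := by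
  rintro ⟨x,y,c,d,rfl,rfl,hb1,hb2⟩
  have h0 : 0 < m := Fin.pos x
  have hxx : cycDist m x x = 0 := cycDist_self x
  rw [cycBtw_iff x] at hb1 hb2
  rw [mem_pair] at h1 h2
  have b1 := cycDist_lt h0 x y; have b2 := cycDist_lt h0 x c; have b3 := cycDist_lt h0 x d
  rcases h1 with rfl|rfl <;> rcases h2 with h2|h2 <;> rw [h2] at hb1 hb2 <;> omega

lemma Triangulation.ext' {T T' : Triangulation m} (h : T.diagonals = T'.diagonals) :
    T = T' := by
  cases T; cases T'; simp_all

lemma IsFlip.mem_new {T T' : Triangulation m} {d d' : Finset (Fin m)}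
    (h : IsFlip m T T' d d') : d' ∈ T'.diagonals := by
  rw [h.2.2]; exact Finset.mem_insert_self _ _

lemma IsFlip.ne {T T' : Triangulation m} {d d' : Finset (Fin m)}
    (h : IsFlip m T T' d d') : d ≠ d' := fun he => h.2.1 (he ▸ h.1)

lemma IsFlip.not_mem_old {T T' : Triangulation m} {d d' : Finset (Fin m)}
    (h : IsFlip m T T' d d') : d ∉ T'.diagonals := by
  rw [h.2.2]
  simp only [Finset.mem_insert, Finset.mem_erase]
  rintro (he | ⟨hne, _⟩)
  · exact h.ne he
  · exact hne rfl

lemma IsFlip.mem_of_mem {T T' : Triangulation m} {d d' : Finset (Fin m)}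
    (h : IsFlip m T T' d d') {g : Finset (Fin m)} (hg : g ∈ T.diagonals) (hne : g ≠ d) :
    g ∈ T'.diagonals := by
  rw [h.2.2]; exact Finset.mem_insert_of_mem (Finset.mem_erase.2 ⟨hne, hg⟩)

lemma IsFlip.symm' {T T' : Triangulation m} {d d' : Finset (Fin m)}
    (h : IsFlip m T T' d d') : IsFlip m T' T d' d := by
  refine ⟨h.mem_new, h.not_mem_old, ?_⟩
  rw [h.2.2, Finset.erase_insert (by simp [h.2.1]), Finset.insert_erase h.1]

lemma IsFlip.cross_new_old {T T' : Triangulation m} {d d' : Finset (Fin m)}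
    (h : IsFlip m T T' d d') : Cross m d' d := by
  by_contra hc
  refine h.2.1 (T.maximal d' (T'.isDiagonal d' h.mem_new) ?_)
  intro g hg hcr
  by_cases hgd : g = d
  · exact hc (hgd ▸ hcr)
  · exact T'.noncross d' h.mem_new g (h.mem_of_mem hg hgd) hcr

lemma exists_next {m : ℕ} (h2m : 2 ≤ m) (x : Fin m) :
    ∃ p : Fin m, cycDist m x p = 1 ∧ PolyAdj m x p := by
  have h0 : 0 < m := by omega
  have hxlt := x.isLt
  have hmod : (x.val + 1) % m = if x.val + 1 < m then x.val + 1 else x.val + 1 - m :=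
    mod_small h0 (by omega)
  refine ⟨⟨(x.val + 1) % m, Nat.mod_lt _ h0⟩, ?_, Or.inl rfl⟩
  have hv : cycDist m x ⟨(x.val + 1) % m, Nat.mod_lt _ h0⟩
      = ((x.val + 1) % m + m - x.val) % m := rfl
  rw [hv, hmod]
  split_ifs with h1
  · rw [mod_small h0 (by omega)]; split_ifs <;> omega
  · rw [mod_small h0 (by omega)]; split_ifs <;> omega

lemma exists_apex (T : Triangulation m) {x y : Fin m} (hxy : {x,y} ∈ T.diagonals) :
    ∃ p : Fin m, CycBtw m x p y ∧ IsSide m T {x,p} ∧ IsSide m T {p,y} := by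
  classical
  have h0 : 0 < m := Fin.pos x
  have hxx : cycDist m x x = 0 := cycDist_self x
  obtain ⟨a',b',hne',hnadj',heq'⟩ := T.isDiagonal _ hxy
  have hxyne : x ≠ y := by
    rcases pair_eq heq' with ⟨h1,h2⟩|⟨h1,h2⟩ <;> rw [h1, h2] <;>
      [exact hne'; exact hne'.symm]
  have hxynadj : ¬ PolyAdj m x y := by
    rcases pair_eq heq' with ⟨h1,h2⟩|⟨h1,h2⟩ <;> rw [h1, h2] <;>
      [exact hnadj'; exact fun hh => hnadj' (polyAdj_symm hh)]
  have hslt : cycDist m x y < m := cycDist_lt h0 x y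
  have hs0 : cycDist m x y ≠ 0 := by
    intro hh
    exact hxyne (cycDist_inj (a := x) (by rw [hxx]; omega)).symm
  have hs1 : cycDist m x y ≠ 1 := by
    intro hh
    exact hxynadj ((polyAdj_iff x x y).2 (Or.inl (by rw [hxx]; omega)))
  obtain ⟨p0, hp0, hp0adj⟩ := exists_next (by omega) x
  have hP0btw : CycBtw m x p0 y := by
    rw [cycBtw_iff x, hxx, hp0]; omega
  have hP0side : IsSide m T {x, p0} := Or.inl ⟨x, p0, hp0adj, rfl⟩
  obtain ⟨p, hpP, hpmax⟩ := Finset.exists_max_image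
    (Finset.univ.filter (fun q => CycBtw m x q y ∧ IsSide m T {x,q}))
    (fun q => cycDist m x q)
    ⟨p0, Finset.mem_filter.2 ⟨Finset.mem_univ _, hP0btw, hP0side⟩⟩
  rw [Finset.mem_filter] at hpP
  obtain ⟨-, hpb, hps⟩ := hpP
  refine ⟨p, hpb, hps, ?_⟩
  by_cases hadj : PolyAdj m p y
  · exact Or.inl ⟨p, y, hadj, rfl⟩
  right
  have hpbtw := hpb
  rw [cycBtw_iff x, hxx] at hpbtw
  have hnplt := cycDist_lt h0 x p
  have hpyne : p ≠ y := by
    intro hh; rw [hh] at hpbtw; omega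
  apply T.maximal _ ⟨p, y, hpyne, hadj, rfl⟩
  intro g hg hcross
  obtain ⟨u, v, huvne, huvnadj, rfl⟩ := T.isDiagonal g hg
  exfalso
  have key : ∀ u v : Fin m, {u,v} ∈ T.diagonals → CycBtw m p u y → CycBtw m y v p → False := by
    intro u v hguv hbu hbv
    have bu := cycDist_lt h0 x u; have bv := cycDist_lt h0 x v
    rw [cycBtw_iff x] at hbu hbv
    have hnc1 : ¬ Cross m {x,y} {u,v} := T.noncross _ hxy _ hguv
    have hn1 : ¬(CycBtw m x u y ∧ CycBtw m y v x) := fun hh => hnc1 (cross_intro hh.1 hh.2)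
    have f1 : 0 < cycDist m x p ∧ cycDist m x p < cycDist m x y := by
      clear * - hpbtw hslt hnplt; omega
    have f2 : cycDist m x p < cycDist m x u ∧ cycDist m x u < cycDist m x y := by
      clear * - hbu f1 bu hslt hnplt; omega
    have f3 : cycDist m x y < cycDist m x v ∨ cycDist m x v < cycDist m x p := by
      clear * - hbv f1 bv hslt hnplt; omega
    have f4 : ¬ (cycDist m x y < cycDist m x v) := by
      intro hh
      apply hn1
      constructor
      · rw [cycBtw_iff x, hxx]; clear * - f1 f2 hslt; omega
      · rw [cycBtw_iff x, hxx]; clear * - hh bv hslt f1; omega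
    have f5 : cycDist m x v < cycDist m x p := by clear * - f3 f4; omega
    have f6 : cycDist m x v = 0 := by
      rcases hps with ⟨a1,b1,hadj1,heq1⟩ | hmem
      · have hadjxp : PolyAdj m x p := by
          rcases pair_eq heq1 with ⟨h1,h2⟩|⟨h1,h2⟩
          · rw [← h1, ← h2] at hadj1; exact hadj1
          · rw [← h1, ← h2] at hadj1; exact polyAdj_symm hadj1
        rw [polyAdj_iff x, hxx] at hadjxp
        clear * - hadjxp f1 f5 hslt hnplt; omega
      · have hnc2 : ¬ Cross m {x,p} {u,v} := T.noncross _ hmem _ hguv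
        have hn4 : ¬(CycBtw m x v p ∧ CycBtw m p u x) := fun hh => hnc2 (by
          rw [Finset.pair_comm u v]; exact cross_intro hh.1 hh.2)
        by_contra hpos
        apply hn4
        constructor
        · rw [cycBtw_iff x, hxx]; clear * - f5 hpos; omega
        · rw [cycBtw_iff x, hxx]; clear * - f1 f2 bu; omega
    have hvx : v = x := by
      apply cycDist_inj (a := x); rw [hxx]; clear * - f6; omega
    rw [hvx] at hguv
    have hcb : CycBtw m x u y := by
      rw [cycBtw_iff x, hxx]; clear * - f1 f2; omega
    have hmem' : {x, u} ∈ T.diagonals := by rwa [Finset.pair_comm u x] at hguv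
    have hle := hpmax u (Finset.mem_filter.2 ⟨Finset.mem_univ _, hcb, Or.inr hmem'⟩)
    clear * - hle f2; omega
  rcases cross_elim hcross rfl rfl with ⟨h1,h2⟩|⟨h1,h2⟩
  · exact key u v hg h1 h2
  · exact key v u (by rwa [Finset.pair_comm]) h1 h2

end Tri
section Pi
open scoped Classical

noncomputable def nonX (m : ℕ) (eE : Finset (Fin m)) (T : Triangulation m) :
    Finset (Finset (Fin m)) :=
  T.diagonals.filter (fun d => ¬ Cross m d eE)

noncomputable def Vset (m : ℕ) (eE : Finset (Fin m)) (T : Triangulation m) :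
    Finset (Fin m) :=
  (T.diagonals.filter (fun d => Cross m d eE)).biUnion id

noncomputable def fanSet (m : ℕ) (a : Fin m) (eE : Finset (Fin m)) (T : Triangulation m) :
    Finset (Finset (Fin m)) :=
  ((Vset m eE T).filter (fun v => ¬ PolyAdj m a v)).image (fun v => {a, v})

noncomputable def piD (m : ℕ) (a : Fin m) (eE : Finset (Fin m)) (T : Triangulation m) :
    Finset (Finset (Fin m)) :=
  insert eE (nonX m eE T ∪ fanSet m a eE T)

variable {m : ℕ}

lemma mem_nonX {eE g : Finset (Fin m)} {T : Triangulation m} :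
    g ∈ nonX m eE T ↔ g ∈ T.diagonals ∧ ¬ Cross m g eE := by
  simp [nonX]

lemma mem_Vset {eE : Finset (Fin m)} {T : Triangulation m} {v : Fin m} :
    v ∈ Vset m eE T ↔ ∃ d ∈ T.diagonals, Cross m d eE ∧ v ∈ d := by
  simp only [Vset, Finset.mem_biUnion, Finset.mem_filter, id]
  tauto

lemma mem_fanSet {a : Fin m} {eE g : Finset (Fin m)} {T : Triangulation m} :
    g ∈ fanSet m a eE T ↔ ∃ v, v ∈ Vset m eE T ∧ ¬ PolyAdj m a v ∧ g = {a,v} := by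
  simp only [fanSet, Finset.mem_image, Finset.mem_filter]
  constructor
  · rintro ⟨v, ⟨h1, h2⟩, h3⟩; exact ⟨v, h1, h2, h3.symm⟩
  · rintro ⟨v, h1, h2, h3⟩; exact ⟨v, ⟨h1, h2⟩, h3.symm⟩

lemma mem_piD {a : Fin m} {eE g : Finset (Fin m)} {T : Triangulation m} :
    g ∈ piD m a eE T ↔ g = eE ∨ g ∈ nonX m eE T ∨ g ∈ fanSet m a eE T := by
  simp only [piD, Finset.mem_insert, Finset.mem_union]

lemma eE_mem_piD {a : Fin m} {eE : Finset (Fin m)} {T : Triangulation m} :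
    eE ∈ piD m a eE T := Finset.mem_insert_self _ _

variable {a b : Fin m}

/-- basic coordinate facts about the fixed diagonal `{a,b}`. -/
lemma s_facts (hab : a ≠ b) (hnadj : ¬ PolyAdj m a b) :
    2 ≤ cycDist m a b ∧ cycDist m a b + 2 ≤ m := by
  have h0 : 0 < m := Fin.pos a
  have hxx : cycDist m a a = 0 := cycDist_self a
  have hlt : cycDist m a b < m := cycDist_lt h0 a b
  have h1 : cycDist m a b ≠ 0 := fun hh => hab (cycDist_inj (a := a) (by omega)).symm
  have h2 : cycDist m a b ≠ 1 := fun hh => hnadj ((polyAdj_iff a a b).2 (by omega))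
  have h3 : cycDist m a b ≠ m - 1 := fun hh => hnadj ((polyAdj_iff a a b).2 (by omega))
  omega

lemma cross_of_coord {x y c d : Fin m}
    (hc : (cycDist m a x < cycDist m a c ∧ cycDist m a c < cycDist m a y) ∨
          (cycDist m a y < cycDist m a x ∧ cycDist m a x < cycDist m a c) ∨
          (cycDist m a c < cycDist m a y ∧ cycDist m a y < cycDist m a x))
    (hd : (cycDist m a y < cycDist m a d ∧ cycDist m a d < cycDist m a x) ∨
          (cycDist m a x < cycDist m a y ∧ cycDist m a y < cycDist m a d) ∨
          (cycDist m a d < cycDist m a x ∧ cycDist m a x < cycDist m a y)) :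
    Cross m {x,y} {c,d} :=
  cross_intro ((cycBtw_iff a x c y).2 hc) ((cycBtw_iff a y d x).2 hd)

lemma cross_coord {x y c d : Fin m} (h : Cross m {x,y} {c,d}) :
    ((cycDist m a x < cycDist m a c ∧ cycDist m a c < cycDist m a y) ∨
     (cycDist m a y < cycDist m a x ∧ cycDist m a x < cycDist m a c) ∨
     (cycDist m a c < cycDist m a y ∧ cycDist m a y < cycDist m a x)) ∧
    ((cycDist m a y < cycDist m a d ∧ cycDist m a d < cycDist m a x) ∨
     (cycDist m a x < cycDist m a y ∧ cycDist m a y < cycDist m a d) ∨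
     (cycDist m a d < cycDist m a x ∧ cycDist m a x < cycDist m a y)) ∨
    ((cycDist m a x < cycDist m a d ∧ cycDist m a d < cycDist m a y) ∨
     (cycDist m a y < cycDist m a x ∧ cycDist m a x < cycDist m a d) ∨
     (cycDist m a d < cycDist m a y ∧ cycDist m a y < cycDist m a x)) ∧
    ((cycDist m a y < cycDist m a c ∧ cycDist m a c < cycDist m a x) ∨
     (cycDist m a x < cycDist m a y ∧ cycDist m a y < cycDist m a c) ∨
     (cycDist m a c < cycDist m a x ∧ cycDist m a x < cycDist m a y)) := by
  rcases cross_elim h rfl rfl with ⟨h1,h2⟩|⟨h1,h2⟩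
  · left; exact ⟨(cycBtw_iff a x c y).1 h1, (cycBtw_iff a y d x).1 h2⟩
  · right; exact ⟨(cycBtw_iff a x d y).1 h1, (cycBtw_iff a y c x).1 h2⟩

/-- Coordinates of a diagonal crossing `{a,b}`. -/
lemma cross_e_coord (hab : a ≠ b) (hnadj : ¬ PolyAdj m a b) {u v : Fin m}
    (h : Cross m {u,v} {a,b}) :
    (0 < cycDist m a u ∧ cycDist m a u < cycDist m a b ∧
       cycDist m a b < cycDist m a v ∧ cycDist m a v < m) ∨
    (0 < cycDist m a v ∧ cycDist m a v < cycDist m a b ∧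
       cycDist m a b < cycDist m a u ∧ cycDist m a u < m) := by
  have h0 : 0 < m := Fin.pos a
  have hxx : cycDist m a a = 0 := cycDist_self a
  have hlt : cycDist m a b < m := cycDist_lt h0 a b
  have hu := cycDist_lt h0 a u
  have hv := cycDist_lt h0 a v
  rcases cross_coord (a := a) h with ⟨h1,h2⟩|⟨h1,h2⟩ <;> omega

lemma vset_spec {T : Triangulation m} {v : Fin m} (hv : v ∈ Vset m {a,b} T) :
    ∃ w, {v,w} ∈ T.diagonals ∧ Cross m {v,w} {a,b} := by
  rw [mem_Vset] at hv
  obtain ⟨d, hdT, hdcr, hvd⟩ := hv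
  obtain ⟨c, c', hne, hnadj', rfl⟩ := T.isDiagonal d hdT
  rw [mem_pair] at hvd
  rcases hvd with rfl|rfl
  · exact ⟨c', hdT, hdcr⟩
  · rw [Finset.pair_comm c v] at hdT hdcr
    exact ⟨c, hdT, hdcr⟩

lemma vset_coord (hab : a ≠ b) (hnadj : ¬ PolyAdj m a b) {T : Triangulation m} {v : Fin m}
    (hv : v ∈ Vset m {a,b} T) :
    0 < cycDist m a v ∧ cycDist m a v < m ∧ cycDist m a v ≠ cycDist m a b := by
  obtain ⟨w, hw, hcr⟩ := vset_spec hv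
  have h0 : 0 < m := Fin.pos a
  have hvlt := cycDist_lt h0 a v
  rcases cross_e_coord hab hnadj hcr with h|h <;> omega

lemma piD_isDiag (hab : a ≠ b) (hnadj : ¬ PolyAdj m a b) (T : Triangulation m) :
    ∀ g ∈ piD m a ({a,b} : Finset (Fin m)) T, IsDiagonal m g := by
  intro g hg
  rcases mem_piD.1 hg with rfl | hg | hg
  · exact ⟨a, b, hab, hnadj, rfl⟩
  · exact T.isDiagonal g (mem_nonX.1 hg).1
  · obtain ⟨v, hv, hvnadj, rfl⟩ := mem_fanSet.1 hg
    have hva : a ≠ v := by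
      intro hh
      have := (vset_coord hab hnadj hv).1
      rw [← hh, cycDist_self] at this
      omega
    exact ⟨a, v, hva, hvnadj, rfl⟩

lemma fan_compat (hab : a ≠ b) (hnadj : ¬ PolyAdj m a b) {T : Triangulation m} {v : Fin m}
    (hv : v ∈ Vset m {a,b} T) {d : Finset (Fin m)} (hd : d ∈ T.diagonals)
    (hnc : ¬ Cross m d {a,b}) : ¬ Cross m {a,v} d := by
  intro hcr
  obtain ⟨x, y, hxyne, hxynadj, rfl⟩ := T.isDiagonal d hd
  obtain ⟨w, hvwT, hvwcr⟩ := vset_spec hv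
  have h0 : 0 < m := Fin.pos a
  have hxx : cycDist m a a = 0 := cycDist_self a
  have hsf := s_facts hab hnadj
  have hslt := cycDist_lt h0 a b
  have bv := cycDist_lt h0 a v
  have bw := cycDist_lt h0 a w
  have hvw := cross_e_coord hab hnadj hvwcr
  have hxy' : (0 < cycDist m a x ∧ cycDist m a x < cycDist m a v ∧
        cycDist m a v < cycDist m a y ∧ cycDist m a y < m) ∨
      (0 < cycDist m a y ∧ cycDist m a y < cycDist m a v ∧
        cycDist m a v < cycDist m a x ∧ cycDist m a x < m) := by
    have bx := cycDist_lt h0 a x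
    have by' := cycDist_lt h0 a y
    rcases cross_coord (a := a) hcr with ⟨h1,h2⟩|⟨h1,h2⟩ <;> omega
  have key : ∀ x y : Fin m, {x,y} ∈ T.diagonals → ¬ Cross m {x,y} {a,b} →
      0 < cycDist m a x → cycDist m a x < cycDist m a v →
      cycDist m a v < cycDist m a y → cycDist m a y < m → False := by
    intro x y hdT hncd hx1 hx2 hx3 hx4
    have bx := cycDist_lt h0 a x
    rcases hvw with ⟨hv1,hv2,hv3,hv4⟩|⟨hw1,hw2,hw3,hw4⟩
    · have hyle : cycDist m a y ≤ cycDist m a b := by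
        by_contra hgt
        have hc2 : Cross m {x,y} {b,a} := cross_of_coord (a := a) (by omega) (by omega)
        exact hncd (by rwa [Finset.pair_comm b a] at hc2)
      exact T.noncross _ hdT _ hvwT (cross_of_coord (a := a) (by omega) (by omega))
    · have hxge : cycDist m a b ≤ cycDist m a x := by
        by_contra hlt2
        have hc2 : Cross m {x,y} {b,a} := cross_of_coord (a := a) (by omega) (by omega)
        exact hncd (by rwa [Finset.pair_comm b a] at hc2)
      exact T.noncross _ hdT _ hvwT (cross_of_coord (a := a) (by omega) (by omega))
  rcases hxy' with ⟨h1,h2,h3,h4⟩|⟨h1,h2,h3,h4⟩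
  · exact key x y hd hnc h1 h2 h3 h4
  · refine key y x ?_ ?_ h1 h2 h3 h4
    · rwa [Finset.pair_comm y x]
    · rwa [Finset.pair_comm y x]

lemma piD_noncross (hab : a ≠ b) (hnadj : ¬ PolyAdj m a b) (T : Triangulation m) :
    ∀ g₁ ∈ piD m a ({a,b} : Finset (Fin m)) T, ∀ g₂ ∈ piD m a ({a,b} : Finset (Fin m)) T,
      ¬ Cross m g₁ g₂ := by
  have hmema : ∀ v : Fin m, a ∈ ({a,v} : Finset (Fin m)) := fun v => by simp
  intro g₁ h₁ g₂ h₂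
  rcases mem_piD.1 h₁ with rfl|hn1|hf1 <;> rcases mem_piD.1 h₂ with rfl|hn2|hf2
  · exact not_cross_shared (hmema b) (hmema b)
  · exact fun h => (mem_nonX.1 hn2).2 (cross_symm h)
  · obtain ⟨v, hv, hvn, rfl⟩ := mem_fanSet.1 hf2
    exact not_cross_shared (hmema b) (hmema v)
  · exact fun h => (mem_nonX.1 hn1).2 h
  · exact T.noncross _ (mem_nonX.1 hn1).1 _ (mem_nonX.1 hn2).1
  · obtain ⟨v, hv, hvn, rfl⟩ := mem_fanSet.1 hf2
    exact fun h => fan_compat hab hnadj hv (mem_nonX.1 hn1).1 (mem_nonX.1 hn1).2 (cross_symm h)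
  · obtain ⟨v, hv, hvn, rfl⟩ := mem_fanSet.1 hf1
    exact not_cross_shared (hmema v) (hmema b)
  · obtain ⟨v, hv, hvn, rfl⟩ := mem_fanSet.1 hf1
    exact fan_compat hab hnadj hv (mem_nonX.1 hn2).1 (mem_nonX.1 hn2).2
  · obtain ⟨v, hv, hvn, rfl⟩ := mem_fanSet.1 hf1
    obtain ⟨v', hv', hvn', rfl⟩ := mem_fanSet.1 hf2
    exact not_cross_shared (hmema v) (hmema v')
end Pi

section Pi2
open scoped Classical
variable {m : ℕ} {a b : Fin m}

lemma side_mem {T : Triangulation m} {u u' : Fin m} (h : IsSide m T {u,u'})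
    (hna : ¬ PolyAdj m u u') : {u,u'} ∈ T.diagonals := by
  rcases h with ⟨c1,c2,hadj,heq⟩|hmem
  · exfalso
    apply hna
    rcases pair_eq heq with ⟨e1,e2⟩|⟨e1,e2⟩
    · rw [e1, e2]; exact hadj
    · rw [e1, e2]; exact polyAdj_symm hadj
  · exact hmem

lemma cross_e_of_coord {u v : Fin m}
    (h1 : 0 < cycDist m a u) (h2 : cycDist m a u < cycDist m a b)
    (h3 : cycDist m a b < cycDist m a v) (h4 : cycDist m a v < m) :
    Cross m {u,v} {a,b} := by
  have hxx : cycDist m a a = 0 := cycDist_self a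
  have h : Cross m {u,v} {b,a} := cross_of_coord (a := a) (by omega) (by omega)
  rwa [Finset.pair_comm b a] at h

lemma mem_Vset_of {T : Triangulation m} {v w : Fin m} (h : {v,w} ∈ T.diagonals)
    (hc : Cross m {v,w} {a,b}) : v ∈ Vset m ({a,b} : Finset (Fin m)) T :=
  mem_Vset.2 ⟨_, h, hc, by simp⟩

lemma mem_Vset_of' {T : Triangulation m} {v w : Fin m} (h : {v,w} ∈ T.diagonals)
    (hc : Cross m {v,w} {a,b}) : w ∈ Vset m ({a,b} : Finset (Fin m)) T :=
  mem_Vset.2 ⟨_, h, hc, by simp⟩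

lemma piD_maximal (hab : a ≠ b) (hnadj : ¬ PolyAdj m a b) (T : Triangulation m) :
    ∀ g, IsDiagonal m g →
      (∀ g' ∈ piD m a ({a,b} : Finset (Fin m)) T, ¬ Cross m g g') →
      g ∈ piD m a ({a,b} : Finset (Fin m)) T := by
  intro g hgdiag hgnc
  obtain ⟨x, y, hxyne, hxynadj, rfl⟩ := hgdiag
  have h0 : 0 < m := Fin.pos a
  have hxx : cycDist m a a = 0 := cycDist_self a
  have hsf := s_facts hab hnadj
  have hslt := cycDist_lt h0 a b
  have bx := cycDist_lt h0 a x
  have by' := cycDist_lt h0 a y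
  by_cases hgT : ∀ d ∈ T.diagonals, ¬ Cross m {x,y} d
  · have hmemT : {x,y} ∈ T.diagonals := T.maximal _ ⟨x,y,hxyne,hxynadj,rfl⟩ hgT
    have hnce : ¬ Cross m {x,y} {a,b} := hgnc _ eE_mem_piD
    exact mem_piD.2 (Or.inr (Or.inl (mem_nonX.2 ⟨hmemT, hnce⟩)))
  push_neg at hgT
  obtain ⟨d0, hd0T, hd0cr⟩ := hgT
  by_cases hgeE : ({x,y} : Finset (Fin m)) = {a,b}
  · rw [hgeE]; exact eE_mem_piD
  have hnce : ¬ Cross m {x,y} {a,b} := hgnc _ eE_mem_piD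
  have crossE : ∀ d ∈ T.diagonals, Cross m {x,y} d → Cross m d {a,b} := by
    intro d hd hcr
    by_contra hnc2
    exact hgnc d (mem_piD.2 (Or.inr (Or.inl (mem_nonX.2 ⟨hd, hnc2⟩)))) hcr
  -- x,y not strictly separated by e
  have hsep1 : ¬(0 < cycDist m a x ∧ cycDist m a x < cycDist m a b ∧
      cycDist m a b < cycDist m a y) := by
    rintro ⟨u1,u2,u3⟩
    have hc : Cross m {x,y} {b,a} := cross_of_coord (a := a) (by omega) (by omega)
    exact hnce (by rwa [Finset.pair_comm b a] at hc)
  have hsep2 : ¬(0 < cycDist m a y ∧ cycDist m a y < cycDist m a b ∧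
      cycDist m a b < cycDist m a x) := by
    rintro ⟨u1,u2,u3⟩
    exact hnce (cross_of_coord (a := a) (by omega) (by omega))
  -- get an A-oriented crossing diagonal of T crossed by g
  have hA : ∃ v w : Fin m, {v,w} ∈ T.diagonals ∧ Cross m {x,y} {v,w} ∧
      0 < cycDist m a v ∧ cycDist m a v < cycDist m a b ∧
      cycDist m a b < cycDist m a w ∧ cycDist m a w < m := by
    obtain ⟨c, c', hne0, hnadj0, rfl⟩ := T.isDiagonal d0 hd0T
    rcases cross_e_coord hab hnadj (crossE _ hd0T hd0cr) with h|h
    · exact ⟨c, c', hd0T, hd0cr, h.1, h.2.1, h.2.2.1, h.2.2.2⟩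
    · rw [Finset.pair_comm c c'] at hd0T hd0cr
      exact ⟨c', c, hd0T, hd0cr, h.1, h.2.1, h.2.2.1, h.2.2.2⟩
  obtain ⟨v, w, hvwT, hvwcr, hv1, hv2, hw1, hw2⟩ := hA
  have hcases : (cycDist m a x ≤ cycDist m a b ∧ cycDist m a y ≤ cycDist m a b) ∨
      ((cycDist m a x = 0 ∨ cycDist m a b ≤ cycDist m a x) ∧
       (cycDist m a y = 0 ∨ cycDist m a b ≤ cycDist m a y)) := by omega
  rcases hcases with ⟨hxA, hyA⟩ | ⟨hxB, hyB⟩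
  · -- CASE (i) : both endpoints of g on the closed A side
    have hrole : (cycDist m a x < cycDist m a v ∧ cycDist m a v < cycDist m a y) ∨
        (cycDist m a y < cycDist m a v ∧ cycDist m a v < cycDist m a x) := by
      rcases cross_coord (a := a) hvwcr with ⟨h1,h2⟩|⟨h1,h2⟩ <;> omega
    have main : ∀ p q : Fin m, ({q,p} : Finset (Fin m)) = {x,y} →
        cycDist m a q < cycDist m a v → cycDist m a v < cycDist m a p →
        cycDist m a p ≤ cycDist m a b →
        ({x,y} : Finset (Fin m)) ∈ piD m a ({a,b} : Finset (Fin m)) T := by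
      intro p q hpq hq hvp hps
      have bp := cycDist_lt h0 a p
      have bq := cycDist_lt h0 a q
      by_cases hq0 : cycDist m a q = 0
      case neg =>
        exfalso
        have hvV : v ∈ Vset m ({a,b} : Finset (Fin m)) T :=
          mem_Vset_of hvwT (crossE _ hvwT hvwcr)
        have hvnadj : ¬ PolyAdj m a v := by
          intro h; rw [polyAdj_iff a, hxx] at h; omega
        have hfmem : ({a,v} : Finset (Fin m)) ∈ piD m a ({a,b} : Finset (Fin m)) T :=
          mem_piD.2 (Or.inr (Or.inr (mem_fanSet.2 ⟨v, hvV, hvnadj, rfl⟩)))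
        apply hgnc _ hfmem
        rw [← hpq]
        have hc : Cross m {q,p} {v,a} := cross_of_coord (a := a) (by omega) (by omega)
        rwa [Finset.pair_comm v a] at hc
      case pos =>
        have hqa : q = a := cycDist_inj (a := a) (by omega)
        rw [hqa] at hpq
        have hnps : cycDist m a p ≠ cycDist m a b := by
          intro hh
          have hpb : p = b := cycDist_inj (a := a) (by omega)
          rw [hpb] at hpq
          exact hgeE hpq.symm
        by_cases hpV : p ∈ Vset m ({a,b} : Finset (Fin m)) T
        · have hpnadj : ¬ PolyAdj m a p := by
            intro h; rw [polyAdj_iff a, hxx] at h; omega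
          rw [← hpq]
          exact mem_piD.2 (Or.inr (Or.inr (mem_fanSet.2 ⟨p, hpV, hpnadj, rfl⟩)))
        · exfalso
          -- extremal crossing diagonal
          have hvwC : ({v,w} : Finset (Fin m)) ∈ T.diagonals ∧ Cross m {x,y} {v,w} ∧
              0 < cycDist m a v ∧ cycDist m a v < cycDist m a b ∧
              cycDist m a b < cycDist m a w ∧ cycDist m a w < m :=
            ⟨hvwT, hvwcr, hv1, hv2, hw1, hw2⟩
          obtain ⟨z0, hz0C, hmaxA⟩ := Finset.exists_max_image
            (Finset.univ.filter (fun z : Fin m × Fin m =>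
              ({z.1, z.2} : Finset (Fin m)) ∈ T.diagonals ∧ Cross m {x,y} {z.1, z.2} ∧
              0 < cycDist m a z.1 ∧ cycDist m a z.1 < cycDist m a b ∧
              cycDist m a b < cycDist m a z.2 ∧ cycDist m a z.2 < m))
            (fun z => cycDist m a z.1)
            ⟨(v,w), Finset.mem_filter.2 ⟨Finset.mem_univ _, hvwC⟩⟩
          obtain ⟨z, hzC2, hminB⟩ := Finset.exists_min_image
            ((Finset.univ.filter (fun z : Fin m × Fin m =>
              ({z.1, z.2} : Finset (Fin m)) ∈ T.diagonals ∧ Cross m {x,y} {z.1, z.2} ∧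
              0 < cycDist m a z.1 ∧ cycDist m a z.1 < cycDist m a b ∧
              cycDist m a b < cycDist m a z.2 ∧ cycDist m a z.2 < m)).filter
                (fun z => cycDist m a z.1 = cycDist m a z0.1))
            (fun z => cycDist m a z.2)
            ⟨z0, Finset.mem_filter.2 ⟨hz0C, rfl⟩⟩
          rw [Finset.mem_filter] at hzC2
          obtain ⟨hzC, hzEq⟩ := hzC2
          rw [Finset.mem_filter] at hzC
          obtain ⟨-, hzT, hzcr, hz1, hz2, hz3, hz4⟩ := hzC
          -- z.1 strictly inside (a, p), p strictly inside (z.1, z.2)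
          rw [← hpq] at hzcr
          have hz5 : cycDist m a z.1 < cycDist m a p ∧ cycDist m a p < cycDist m a z.2 := by
            rcases cross_coord (a := a) hzcr with ⟨h1,h2⟩|⟨h1,h2⟩ <;> omega
          obtain ⟨pa, hpab, hpas1, hpas2⟩ := exists_apex T hzT
          have bpa := cycDist_lt h0 a pa
          rw [cycBtw_iff a] at hpab
          have hpa1 : cycDist m a z.1 < cycDist m a pa ∧ cycDist m a pa < cycDist m a z.2 := by
            omega
          have hcase : cycDist m a pa < cycDist m a p ∨ cycDist m a pa = cycDist m a p ∨
              (cycDist m a p < cycDist m a pa ∧ cycDist m a pa < cycDist m a b) ∨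
              cycDist m a pa = cycDist m a b ∨ cycDist m a b < cycDist m a pa := by omega
          rcases hcase with h5 | h5 | ⟨h5, h6⟩ | h5 | h5
          · -- pa strictly between z.1 and p : contradicts maximality of z.1
            have hmemT : ({pa, z.2} : Finset (Fin m)) ∈ T.diagonals := by
              apply side_mem hpas2
              intro h; rw [polyAdj_iff a] at h; omega
            have hcrg : Cross m {x,y} {pa, z.2} := by
              rw [← hpq]
              exact cross_of_coord (a := a) (by omega) (by omega)
            have := hmaxA (pa, z.2) (Finset.mem_filter.2 ⟨Finset.mem_univ _,
              hmemT, hcrg, by dsimp only; omega, by dsimp only; omega,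
              by dsimp only; omega, by dsimp only; omega⟩)
            dsimp only at this
            omega
          · -- pa = p : then p ∈ Vset, contradiction
            have hpap : pa = p := cycDist_inj (a := a) h5
            rw [hpap] at hpas2
            have hmemT : ({p, z.2} : Finset (Fin m)) ∈ T.diagonals := by
              apply side_mem hpas2
              intro h; rw [polyAdj_iff a] at h; omega
            exact hpV (mem_Vset_of hmemT (cross_e_of_coord (by omega) (by omega)
              (by omega) (by omega)))
          · -- p < pa < b : {z.1, pa} crosses g but lies on side A : contradiction
            have hmemT : ({z.1, pa} : Finset (Fin m)) ∈ T.diagonals := by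
              apply side_mem hpas1
              intro h; rw [polyAdj_iff a] at h; omega
            have hcrg : Cross m {x,y} {z.1, pa} := by
              rw [← hpq]
              exact cross_of_coord (a := a) (by omega) (by omega)
            rcases cross_e_coord hab hnadj (crossE _ hmemT hcrg) with h|h <;> omega
          · -- pa = b : {z.1, b} crosses g and shares b with e : contradiction
            have hpab' : pa = b := cycDist_inj (a := a) h5
            rw [hpab'] at hpas1
            have hmemT : ({z.1, b} : Finset (Fin m)) ∈ T.diagonals := by
              apply side_mem hpas1
              intro h; rw [polyAdj_iff a] at h; omega
            have hcrg : Cross m {x,y} {z.1, b} := by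
              rw [← hpq]
              exact cross_of_coord (a := a) (by omega) (by omega)
            exact not_cross_shared (by simp : b ∈ ({z.1, b} : Finset (Fin m)))
              (by simp : b ∈ ({a, b} : Finset (Fin m))) (crossE _ hmemT hcrg)
          · -- b < pa < z.2 : contradicts minimality of z.2
            have hmemT : ({z.1, pa} : Finset (Fin m)) ∈ T.diagonals := by
              apply side_mem hpas1
              intro h; rw [polyAdj_iff a] at h; omega
            have hcrg : Cross m {x,y} {z.1, pa} := by
              rw [← hpq]
              exact cross_of_coord (a := a) (by omega) (by omega)
            have := hminB (z.1, pa) (Finset.mem_filter.2 ⟨Finset.mem_filter.2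
              ⟨Finset.mem_univ _, hmemT, hcrg, by dsimp only; omega, by dsimp only; omega,
              by dsimp only; omega, by dsimp only; omega⟩,
              by dsimp only; omega⟩)
            dsimp only at this
            omega
    rcases hrole with ⟨h1, h2⟩ | ⟨h1, h2⟩
    · exact main y x rfl h1 h2 hyA
    · exact main x y (Finset.pair_comm y x) h1 h2 hxA
  · -- CASE (ii) : both endpoints of g on the closed B side
    have hrole : (cycDist m a b ≤ cycDist m a y ∧ cycDist m a y < cycDist m a w ∧
          (cycDist m a w < cycDist m a x ∨ cycDist m a x = 0)) ∨
        (cycDist m a b ≤ cycDist m a x ∧ cycDist m a x < cycDist m a w ∧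
          (cycDist m a w < cycDist m a y ∨ cycDist m a y = 0)) := by
      rcases cross_coord (a := a) hvwcr with ⟨h1,h2⟩|⟨h1,h2⟩ <;> omega
    have main2 : ∀ p q : Fin m, ({q,p} : Finset (Fin m)) = {x,y} →
        cycDist m a b ≤ cycDist m a p → cycDist m a p < cycDist m a w →
        (cycDist m a w < cycDist m a q ∨ cycDist m a q = 0) →
        ({x,y} : Finset (Fin m)) ∈ piD m a ({a,b} : Finset (Fin m)) T := by
      intro p q hpq hp1 hp2 hq
      have bp := cycDist_lt h0 a p
      have bq := cycDist_lt h0 a q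
      by_cases hq0 : cycDist m a q = 0
      case neg =>
        exfalso
        have hwV : w ∈ Vset m ({a,b} : Finset (Fin m)) T :=
          mem_Vset_of' hvwT (crossE _ hvwT hvwcr)
        have hwnadj : ¬ PolyAdj m a w := by
          intro h; rw [polyAdj_iff a, hxx] at h; omega
        have hfmem : ({a,w} : Finset (Fin m)) ∈ piD m a ({a,b} : Finset (Fin m)) T :=
          mem_piD.2 (Or.inr (Or.inr (mem_fanSet.2 ⟨w, hwV, hwnadj, rfl⟩)))
        apply hgnc _ hfmem
        rw [← hpq]
        have hc : Cross m {p,q} {w,a} := cross_of_coord (a := a) (by omega) (by omega)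
        rwa [Finset.pair_comm p q, Finset.pair_comm w a] at hc
      case pos =>
        have hqa : q = a := cycDist_inj (a := a) (by omega)
        rw [hqa] at hpq
        have hnps : cycDist m a p ≠ cycDist m a b := by
          intro hh
          have hpb : p = b := cycDist_inj (a := a) (by omega)
          rw [hpb] at hpq
          exact hgeE hpq.symm
        by_cases hpV : p ∈ Vset m ({a,b} : Finset (Fin m)) T
        · have hpnadj : ¬ PolyAdj m a p := by
            intro h; rw [polyAdj_iff a, hxx] at h; omega
          rw [← hpq]
          exact mem_piD.2 (Or.inr (Or.inr (mem_fanSet.2 ⟨p, hpV, hpnadj, rfl⟩)))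
        · exfalso
          have hvwC : ({v,w} : Finset (Fin m)) ∈ T.diagonals ∧ Cross m {x,y} {v,w} ∧
              0 < cycDist m a v ∧ cycDist m a v < cycDist m a b ∧
              cycDist m a b < cycDist m a w ∧ cycDist m a w < m :=
            ⟨hvwT, hvwcr, hv1, hv2, hw1, hw2⟩
          obtain ⟨z0, hz0C, hminB⟩ := Finset.exists_min_image
            (Finset.univ.filter (fun z : Fin m × Fin m =>
              ({z.1, z.2} : Finset (Fin m)) ∈ T.diagonals ∧ Cross m {x,y} {z.1, z.2} ∧
              0 < cycDist m a z.1 ∧ cycDist m a z.1 < cycDist m a b ∧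
              cycDist m a b < cycDist m a z.2 ∧ cycDist m a z.2 < m))
            (fun z => cycDist m a z.2)
            ⟨(v,w), Finset.mem_filter.2 ⟨Finset.mem_univ _, hvwC⟩⟩
          obtain ⟨z, hzC2, hmaxA⟩ := Finset.exists_max_image
            ((Finset.univ.filter (fun z : Fin m × Fin m =>
              ({z.1, z.2} : Finset (Fin m)) ∈ T.diagonals ∧ Cross m {x,y} {z.1, z.2} ∧
              0 < cycDist m a z.1 ∧ cycDist m a z.1 < cycDist m a b ∧
              cycDist m a b < cycDist m a z.2 ∧ cycDist m a z.2 < m)).filter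
                (fun z => cycDist m a z.2 = cycDist m a z0.2))
            (fun z => cycDist m a z.1)
            ⟨z0, Finset.mem_filter.2 ⟨hz0C, rfl⟩⟩
          rw [Finset.mem_filter] at hzC2
          obtain ⟨hzC, hzEq⟩ := hzC2
          rw [Finset.mem_filter] at hzC
          obtain ⟨-, hzT, hzcr, hz1, hz2, hz3, hz4⟩ := hzC
          rw [← hpq] at hzcr
          have hz5 : cycDist m a p < cycDist m a z.2 := by
            rcases cross_coord (a := a) hzcr with ⟨h1,h2⟩|⟨h1,h2⟩ <;> omega
          obtain ⟨pa, hpab, hpas1, hpas2⟩ := exists_apex T hzT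
          have bpa := cycDist_lt h0 a pa
          rw [cycBtw_iff a] at hpab
          have hpa1 : cycDist m a z.1 < cycDist m a pa ∧ cycDist m a pa < cycDist m a z.2 := by
            omega
          have hcase : cycDist m a pa < cycDist m a b ∨ cycDist m a pa = cycDist m a b ∨
              (cycDist m a b < cycDist m a pa ∧ cycDist m a pa < cycDist m a p) ∨
              cycDist m a pa = cycDist m a p ∨ cycDist m a p < cycDist m a pa := by omega
          rcases hcase with h5 | h5 | ⟨h5, h6⟩ | h5 | h5
          · -- z.1 < pa < b : contradicts maximality of z.1
            have hmemT : ({pa, z.2} : Finset (Fin m)) ∈ T.diagonals := by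
              apply side_mem hpas2
              intro h; rw [polyAdj_iff a] at h; omega
            have hcrg : Cross m {x,y} {pa, z.2} := by
              rw [← hpq]
              exact cross_of_coord (a := a) (by omega) (by omega)
            have := hmaxA (pa, z.2) (Finset.mem_filter.2 ⟨Finset.mem_filter.2
              ⟨Finset.mem_univ _, hmemT, hcrg, by dsimp only; omega, by dsimp only; omega,
              by dsimp only; omega, by dsimp only; omega⟩,
              by dsimp only; omega⟩)
            dsimp only at this
            omega
          · -- pa = b : {b, z.2} crosses g and shares b with e : contradiction
            have hpab' : pa = b := cycDist_inj (a := a) h5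
            rw [hpab'] at hpas2
            have hmemT : ({b, z.2} : Finset (Fin m)) ∈ T.diagonals := by
              apply side_mem hpas2
              intro h; rw [polyAdj_iff a] at h; omega
            have hcrg : Cross m {x,y} {b, z.2} := by
              rw [← hpq]
              exact cross_of_coord (a := a) (by omega) (by omega)
            exact not_cross_shared (by simp : b ∈ ({b, z.2} : Finset (Fin m)))
              (by simp : b ∈ ({a, b} : Finset (Fin m))) (crossE _ hmemT hcrg)
          · -- b < pa < p : {pa, z.2} crosses g but lies on side B : contradiction
            have hmemT : ({pa, z.2} : Finset (Fin m)) ∈ T.diagonals := by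
              apply side_mem hpas2
              intro h; rw [polyAdj_iff a] at h; omega
            have hcrg : Cross m {x,y} {pa, z.2} := by
              rw [← hpq]
              exact cross_of_coord (a := a) (by omega) (by omega)
            rcases cross_e_coord hab hnadj (crossE _ hmemT hcrg) with h|h <;> omega
          · -- pa = p : then p ∈ Vset, contradiction
            have hpap : pa = p := cycDist_inj (a := a) h5
            rw [hpap] at hpas1
            have hmemT : ({z.1, p} : Finset (Fin m)) ∈ T.diagonals := by
              apply side_mem hpas1
              intro h; rw [polyAdj_iff a] at h; omega
            exact hpV (mem_Vset_of' hmemT (cross_e_of_coord (by omega) (by omega)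
              (by omega) (by omega)))
          · -- p < pa < z.2 : contradicts minimality of z.2
            have hmemT : ({z.1, pa} : Finset (Fin m)) ∈ T.diagonals := by
              apply side_mem hpas1
              intro h; rw [polyAdj_iff a] at h; omega
            have hcrg : Cross m {x,y} {z.1, pa} := by
              rw [← hpq]
              exact cross_of_coord (a := a) (by omega) (by omega)
            have := hminB (z.1, pa) (Finset.mem_filter.2 ⟨Finset.mem_univ _,
              hmemT, hcrg, by dsimp only; omega, by dsimp only; omega,
              by dsimp only; omega, by dsimp only; omega⟩)
            dsimp only at this
            omega
    rcases hrole with ⟨h1, h2, h3⟩ | ⟨h1, h2, h3⟩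
    · exact main2 y x rfl h1 h2 h3
    · exact main2 x y (Finset.pair_comm y x) h1 h2 h3

end Pi2
section Pi3
open scoped Classical
variable {m : ℕ} {a b : Fin m}

noncomputable def piT (a b : Fin m) (hab : a ≠ b) (hnadj : ¬ PolyAdj m a b)
    (T : Triangulation m) : Triangulation m where
  diagonals := piD m a ({a,b} : Finset (Fin m)) T
  isDiagonal := piD_isDiag hab hnadj T
  noncross := piD_noncross hab hnadj T
  maximal := piD_maximal hab hnadj T

lemma piT_diag (hab : a ≠ b) (hnadj : ¬ PolyAdj m a b) (T : Triangulation m) :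
    (piT a b hab hnadj T).diagonals = piD m a ({a,b} : Finset (Fin m)) T := rfl

lemma piD_cases {T : Triangulation m} {g : Finset (Fin m)}
    (hg : g ∈ piD m a ({a,b} : Finset (Fin m)) T) :
    g ∈ nonX m ({a,b} : Finset (Fin m)) T ∨ a ∈ g := by
  rcases mem_piD.1 hg with rfl | hg | hg
  · right; simp
  · left; exact hg
  · right; obtain ⟨v, _, _, rfl⟩ := mem_fanSet.1 hg; simp

lemma nonX_mem_piD {T : Triangulation m} {g : Finset (Fin m)}
    (hg : g ∈ nonX m ({a,b} : Finset (Fin m)) T) :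
    g ∈ piD m a ({a,b} : Finset (Fin m)) T :=
  mem_piD.2 (Or.inr (Or.inl hg))

/-- The master equality criterion for projections. -/
lemma piT_eq_of (hab : a ≠ b) (hnadj : ¬ PolyAdj m a b) {T T' : Triangulation m}
    (h1 : ∀ g ∈ nonX m ({a,b} : Finset (Fin m)) T,
      g ∈ nonX m ({a,b} : Finset (Fin m)) T' ∨ a ∈ g)
    (h2 : ∀ g ∈ nonX m ({a,b} : Finset (Fin m)) T',
      g ∈ nonX m ({a,b} : Finset (Fin m)) T ∨ a ∈ g) :
    piT a b hab hnadj T' = piT a b hab hnadj T := by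
  have key : ∀ g ∈ piD m a ({a,b} : Finset (Fin m)) T',
      ∀ h ∈ piD m a ({a,b} : Finset (Fin m)) T, ¬ Cross m g h := by
    intro g hg h hh
    rcases piD_cases hg with hgn | hga
    · rcases h2 g hgn with hgn' | hga
      · exact piD_noncross hab hnadj T _ (nonX_mem_piD hgn') _ hh
      · rcases piD_cases hh with hhn | hha
        · rcases h1 h hhn with hhn' | hha
          · exact piD_noncross hab hnadj T' _ (nonX_mem_piD hgn) _ (nonX_mem_piD hhn')
          · exact not_cross_shared hga hha
        · exact not_cross_shared hga hha
    · rcases piD_cases hh with hhn | hha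
      · rcases h1 h hhn with hhn' | hha
        · exact piD_noncross hab hnadj T' _ hg _ (nonX_mem_piD hhn')
        · exact not_cross_shared hga hha
      · exact not_cross_shared hga hha
  apply Triangulation.ext'
  apply Finset.Subset.antisymm
  · intro g hg
    exact piD_maximal hab hnadj T g (piD_isDiag hab hnadj T' g hg) (key g hg)
  · intro h hh
    exact piD_maximal hab hnadj T' h (piD_isDiag hab hnadj T h hh)
      (fun g hg hc => key g hg h hh (cross_symm hc))

lemma mem_T'_iff {T T' : Triangulation m} {d d' : Finset (Fin m)}
    (hf : IsFlip m T T' d d') {g : Finset (Fin m)} :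
    g ∈ T'.diagonals ↔ g = d' ∨ (g ≠ d ∧ g ∈ T.diagonals) := by
  rw [hf.2.2]
  simp [Finset.mem_insert, Finset.mem_erase]

lemma nonX_flip_mem {T T' : Triangulation m} {d d' : Finset (Fin m)}
    (hf : IsFlip m T T' d d') {g : Finset (Fin m)} :
    g ∈ nonX m ({a,b} : Finset (Fin m)) T' ↔
      (g = d' ∧ ¬ Cross m d' ({a,b} : Finset (Fin m))) ∨
      (g ∈ nonX m ({a,b} : Finset (Fin m)) T ∧ g ≠ d) := by
  rw [mem_nonX, mem_T'_iff hf, mem_nonX]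
  constructor
  · rintro ⟨rfl | ⟨h1, h2⟩, h3⟩
    · exact Or.inl ⟨rfl, h3⟩
    · exact Or.inr ⟨⟨h2, h3⟩, h1⟩
  · rintro (⟨rfl, h1⟩ | ⟨⟨h1, h2⟩, h3⟩)
    · exact ⟨Or.inl rfl, h1⟩
    · exact ⟨Or.inr ⟨h3, h1⟩, h2⟩

/-- Flipping the common diagonal itself does not change the projection. -/
lemma piT_flip_e (hab : a ≠ b) (hnadj : ¬ PolyAdj m a b) {T T' : Triangulation m}
    {d' : Finset (Fin m)} (hf : IsFlip m T T' ({a,b} : Finset (Fin m)) d') :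
    piT a b hab hnadj T' = piT a b hab hnadj T := by
  have hXd' : Cross m d' ({a,b} : Finset (Fin m)) := hf.cross_new_old
  apply piT_eq_of hab hnadj
  · intro g hg
    by_cases hge : g = ({a,b} : Finset (Fin m))
    · right; rw [hge]; simp
    · left
      rw [nonX_flip_mem hf]
      exact Or.inr ⟨hg, hge⟩
  · intro g hg
    rw [nonX_flip_mem hf] at hg
    rcases hg with ⟨rfl, h1⟩ | ⟨h1, h2⟩
    · exact absurd hXd' h1
    · exact Or.inl h1

end Pi3
section Pi4
open scoped Classical
variable {m : ℕ} {a b : Fin m}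

lemma piT_flip_XX (hab : a ≠ b) (hnadj : ¬ PolyAdj m a b) {T T' : Triangulation m}
    {d d' : Finset (Fin m)} (hf : IsFlip m T T' d d')
    (hXd : Cross m d ({a,b} : Finset (Fin m)))
    (hXd' : Cross m d' ({a,b} : Finset (Fin m))) :
    piT a b hab hnadj T' = piT a b hab hnadj T := by
  apply piT_eq_of hab hnadj
  · intro g hg
    left
    rw [nonX_flip_mem hf]
    refine Or.inr ⟨hg, ?_⟩
    intro hh
    rw [hh] at hg
    exact (mem_nonX.1 hg).2 hXd
  · intro g hg
    rw [nonX_flip_mem hf] at hg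
    rcases hg with ⟨rfl, h1⟩ | ⟨h1, h2⟩
    · exact absurd hXd' h1
    · exact Or.inl h1

lemma fan_flip_eq {T T' : Triangulation m} {d d' : Finset (Fin m)}
    (hf : IsFlip m T T' d d')
    (hXd : ¬ Cross m d ({a,b} : Finset (Fin m)))
    (hXd' : ¬ Cross m d' ({a,b} : Finset (Fin m))) :
    fanSet m a ({a,b} : Finset (Fin m)) T' = fanSet m a ({a,b} : Finset (Fin m)) T := by
  have hV : Vset m ({a,b} : Finset (Fin m)) T' = Vset m ({a,b} : Finset (Fin m)) T := by
    ext u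
    rw [mem_Vset, mem_Vset]
    constructor
    · rintro ⟨g2, hg2, hx, hu⟩
      rw [mem_T'_iff hf] at hg2
      rcases hg2 with rfl | ⟨h1, h2⟩
      · exact absurd hx hXd'
      · exact ⟨g2, h2, hx, hu⟩
    · rintro ⟨g2, hg2, hx, hu⟩
      refine ⟨g2, (mem_T'_iff hf).2 (Or.inr ⟨?_, hg2⟩), hx, hu⟩
      intro hh
      rw [hh] at hx
      exact hXd hx
  simp only [fanSet, hV]

lemma piT_flip_NN (hab : a ≠ b) (hnadj : ¬ PolyAdj m a b) {T T' : Triangulation m}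
    {d d' : Finset (Fin m)} (hf : IsFlip m T T' d d')
    (hXd : ¬ Cross m d ({a,b} : Finset (Fin m)))
    (hXd' : ¬ Cross m d' ({a,b} : Finset (Fin m))) :
    piT a b hab hnadj T' = piT a b hab hnadj T ∨
      IsFlip m (piT a b hab hnadj T) (piT a b hab hnadj T') d d' := by
  have hde : d ≠ ({a,b} : Finset (Fin m)) := by
    intro hh
    have := hf.cross_new_old
    rw [hh] at this
    exact hXd' this
  have hfan := fan_flip_eq hf hXd hXd'
  by_cases hdf : d ∈ fanSet m a ({a,b} : Finset (Fin m)) T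
  · by_cases hd'p : d' ∈ piD m a ({a,b} : Finset (Fin m)) T
    · left
      apply piT_eq_of hab hnadj
      · intro g hg
        by_cases hgd : g = d
        · right
          obtain ⟨v, _, _, hdv⟩ := mem_fanSet.1 hdf
          rw [hgd, hdv]; simp
        · left; rw [nonX_flip_mem hf]; exact Or.inr ⟨hg, hgd⟩
      · intro g hg
        rw [nonX_flip_mem hf] at hg
        rcases hg with ⟨rfl, h1⟩ | ⟨h1, h2⟩
        · right
          rcases piD_cases hd'p with hn | ha
          · exact absurd (mem_nonX.1 hn).1 hf.2.1
          · exact ha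
        · exact Or.inl h1
    · exfalso
      apply hd'p
      have hsub : piD m a ({a,b} : Finset (Fin m)) T ⊆ piD m a ({a,b} : Finset (Fin m)) T' := by
        intro g hg
        rcases mem_piD.1 hg with rfl | hg | hg
        · exact eE_mem_piD
        · by_cases hgd : g = d
          · rw [hgd]; exact mem_piD.2 (Or.inr (Or.inr (hfan ▸ hdf)))
          · exact nonX_mem_piD ((nonX_flip_mem hf).2 (Or.inr ⟨hg, hgd⟩))
        · exact mem_piD.2 (Or.inr (Or.inr (hfan ▸ hg)))
      apply piD_maximal hab hnadj T d' (T'.isDiagonal d' hf.mem_new)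
      intro h hh
      exact piD_noncross hab hnadj T' d'
        (nonX_mem_piD ((nonX_flip_mem hf).2 (Or.inl ⟨rfl, hXd'⟩))) h (hsub hh)
  · by_cases hd'p : d' ∈ piD m a ({a,b} : Finset (Fin m)) T
    · exfalso
      have hsub' : piD m a ({a,b} : Finset (Fin m)) T' ⊆ piD m a ({a,b} : Finset (Fin m)) T := by
        intro g hg
        rcases mem_piD.1 hg with rfl | hg | hg
        · exact eE_mem_piD
        · rw [nonX_flip_mem hf] at hg
          rcases hg with ⟨rfl, _⟩ | ⟨h1, _⟩
          · exact hd'p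
          · exact nonX_mem_piD h1
        · exact mem_piD.2 (Or.inr (Or.inr (hfan ▸ hg)))
      have hdmem : d ∈ piD m a ({a,b} : Finset (Fin m)) T' := by
        apply piD_maximal hab hnadj T' d (T.isDiagonal d hf.1)
        intro h hh
        exact piD_noncross hab hnadj T d (nonX_mem_piD (mem_nonX.2 ⟨hf.1, hXd⟩)) h (hsub' hh)
      rcases mem_piD.1 hdmem with hh | hh | hh
      · exact hde hh
      · rw [nonX_flip_mem hf] at hh
        rcases hh with ⟨hh, _⟩ | ⟨_, hh⟩
        · exact hf.ne hh
        · exact hh rfl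
      · exact hdf (hfan ▸ hh)
    · right
      refine ⟨nonX_mem_piD (mem_nonX.2 ⟨hf.1, hXd⟩), hd'p, ?_⟩
      ext g
      rw [Finset.mem_insert, Finset.mem_erase]
      constructor
      · intro hg
        rcases mem_piD.1 hg with rfl | hg | hg
        · exact Or.inr ⟨Ne.symm hde, eE_mem_piD⟩
        · rw [nonX_flip_mem hf] at hg
          rcases hg with ⟨rfl, _⟩ | ⟨h1, h2⟩
          · exact Or.inl rfl
          · exact Or.inr ⟨h2, nonX_mem_piD h1⟩
        · rw [hfan] at hg
          refine Or.inr ⟨?_, mem_piD.2 (Or.inr (Or.inr hg))⟩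
          intro hh
          rw [hh] at hg
          exact hdf hg
      · rintro (rfl | ⟨hne, hg⟩)
        · exact nonX_mem_piD ((nonX_flip_mem hf).2 (Or.inl ⟨rfl, hXd'⟩))
        · rcases mem_piD.1 hg with rfl | hg | hg
          · exact eE_mem_piD
          · exact nonX_mem_piD ((nonX_flip_mem hf).2 (Or.inr ⟨hg, hne⟩))
          · exact mem_piD.2 (Or.inr (Or.inr (hfan ▸ hg)))
end Pi4
section Pi5
open scoped Classical
variable {m : ℕ} {a b : Fin m}

lemma piT_flip_XN_eq (hab : a ≠ b) (hnadj : ¬ PolyAdj m a b) {T T' : Triangulation m}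
    {d d' : Finset (Fin m)} (hf : IsFlip m T T' d d')
    (hXd : Cross m d ({a,b} : Finset (Fin m)))
    (had' : a ∈ d') :
    piT a b hab hnadj T' = piT a b hab hnadj T := by
  apply piT_eq_of hab hnadj
  · intro g hg
    left
    rw [nonX_flip_mem hf]
    refine Or.inr ⟨hg, ?_⟩
    intro hh
    rw [hh] at hg
    exact (mem_nonX.1 hg).2 hXd
  · intro g hg
    rw [nonX_flip_mem hf] at hg
    rcases hg with ⟨rfl, _⟩ | ⟨h1, _⟩
    · exact Or.inr had'
    · exact Or.inl h1

lemma piT_flip_XN_core (hab : a ≠ b) (hnadj : ¬ PolyAdj m a b) {T T' : Triangulation m}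
    {d d' : Finset (Fin m)} (hf : IsFlip m T T' d d')
    (hXd : Cross m d ({a,b} : Finset (Fin m)))
    (hXd' : ¬ Cross m d' ({a,b} : Finset (Fin m)))
    {g0 : Finset (Fin m)} (hg0fan : g0 ∈ fanSet m a ({a,b} : Finset (Fin m)) T)
    (hcr0 : Cross m d' g0)
    (hgrind : ∀ h ∈ fanSet m a ({a,b} : Finset (Fin m)) T, h ≠ g0 → ¬ Cross m h d') :
    IsFlip m (piT a b hab hnadj T) (piT a b hab hnadj T') g0 d' := by
  have hg0piD : g0 ∈ piD m a ({a,b} : Finset (Fin m)) T :=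
    mem_piD.2 (Or.inr (Or.inr hg0fan))
  have hd'nonX' : d' ∈ nonX m ({a,b} : Finset (Fin m)) T' :=
    (nonX_flip_mem hf).2 (Or.inl ⟨rfl, hXd'⟩)
  have hd'notin : d' ∉ piD m a ({a,b} : Finset (Fin m)) T := fun hin =>
    piD_noncross hab hnadj T d' hin g0 hg0piD hcr0
  have hg0notin' : g0 ∉ piD m a ({a,b} : Finset (Fin m)) T' := fun hin =>
    piD_noncross hab hnadj T' d' (nonX_mem_piD hd'nonX') g0 hin hcr0
  have hnonX_sub : ∀ h ∈ nonX m ({a,b} : Finset (Fin m)) T,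
      h ∈ nonX m ({a,b} : Finset (Fin m)) T' := by
    intro h hh
    rw [nonX_flip_mem hf]
    refine Or.inr ⟨hh, ?_⟩
    intro heq
    rw [heq] at hh
    exact (mem_nonX.1 hh).2 hXd
  refine ⟨hg0piD, hd'notin, ?_⟩
  ext g
  rw [Finset.mem_insert, Finset.mem_erase, piT_diag, piT_diag]
  constructor
  · intro hg
    by_cases hgd' : g = d'
    · exact Or.inl hgd'
    right
    have hgne : g ≠ g0 := fun hh => hg0notin' (hh ▸ hg)
    refine ⟨hgne, ?_⟩
    apply piD_maximal hab hnadj T g (piD_isDiag hab hnadj T' g hg)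
    intro h hh
    rcases piD_cases hg with hgn | hga
    · have hgn2 : g ∈ nonX m ({a,b} : Finset (Fin m)) T := by
        rcases (nonX_flip_mem hf).1 hgn with ⟨h1, _⟩ | ⟨h1, _⟩
        · exact absurd h1 hgd'
        · exact h1
      exact piD_noncross hab hnadj T g (nonX_mem_piD hgn2) h hh
    · rcases piD_cases hh with hhn | hha
      · exact piD_noncross hab hnadj T' g hg h (nonX_mem_piD (hnonX_sub h hhn))
      · exact not_cross_shared hga hha
  · rintro (rfl | ⟨hne, hg⟩)
    · exact nonX_mem_piD hd'nonX'
    apply piD_maximal hab hnadj T' g (piD_isDiag hab hnadj T g hg)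
    intro h hh
    rcases piD_cases hh with hhn | hha
    · by_cases hhd' : h = d'
      · subst hhd'
        rcases mem_piD.1 hg with rfl | hgn | hgf
        · exact fun hc => hXd' (cross_symm hc)
        · have hgT' : g ∈ T'.diagonals := (mem_T'_iff hf).2 (Or.inr ⟨?_, (mem_nonX.1 hgn).1⟩)
          · exact T'.noncross g hgT' h hf.mem_new
          · intro heq
            rw [heq] at hgn
            exact (mem_nonX.1 hgn).2 hXd
        · exact hgrind g hgf hne
      · have hhn2 : h ∈ nonX m ({a,b} : Finset (Fin m)) T := by
          rcases (nonX_flip_mem hf).1 hhn with ⟨h1, _⟩ | ⟨h1, _⟩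
          · exact absurd h1 hhd'
          · exact h1
        exact piD_noncross hab hnadj T g hg h (nonX_mem_piD hhn2)
    · rcases piD_cases hg with hgn | hga
      · exact piD_noncross hab hnadj T' g (nonX_mem_piD (hnonX_sub g hgn)) h hh
      · exact not_cross_shared hga hha
end Pi5
section Pi6
open scoped Classical
variable {m : ℕ} {a b : Fin m}

lemma piT_flip_XN_flip (hab : a ≠ b) (hnadj : ¬ PolyAdj m a b) {T T' : Triangulation m}
    {d d' : Finset (Fin m)} (hf : IsFlip m T T' d d')
    (hXd : Cross m d ({a,b} : Finset (Fin m)))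
    (hXd' : ¬ Cross m d' ({a,b} : Finset (Fin m)))
    (had' : a ∉ d') :
    ∃ g, IsFlip m (piT a b hab hnadj T) (piT a b hab hnadj T') g d' := by
  have h0 : 0 < m := Fin.pos a
  have hxx : cycDist m a a = 0 := cycDist_self a
  have hsf := s_facts hab hnadj
  have hslt := cycDist_lt h0 a b
  -- decompose d
  have hvw : ∃ v w : Fin m, d = {v,w} ∧ 0 < cycDist m a v ∧ cycDist m a v < cycDist m a b ∧
      cycDist m a b < cycDist m a w ∧ cycDist m a w < m := by
    obtain ⟨c, c', hcne, hcnadj, hceq⟩ := T.isDiagonal d hf.1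
    have hXd2 : Cross m {c,c'} ({a,b} : Finset (Fin m)) := hceq ▸ hXd
    rcases cross_e_coord hab hnadj hXd2 with h|h
    · exact ⟨c, c', hceq, h.1, h.2.1, h.2.2.1, h.2.2.2⟩
    · exact ⟨c', c, by rw [hceq, Finset.pair_comm], h.1, h.2.1, h.2.2.1, h.2.2.2⟩
  obtain ⟨v, w, hdvw, hv1, hv2, hw1, hw2⟩ := hvw
  have hdT : ({v,w} : Finset (Fin m)) ∈ T.diagonals := hdvw ▸ hf.1
  have hXdvw : Cross m {v,w} ({a,b} : Finset (Fin m)) := hdvw ▸ hXd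
  -- decompose d'
  obtain ⟨c2, c2', hc2ne, hc2nadj, hd'eq⟩ := T'.isDiagonal d' hf.mem_new
  have bc2 := cycDist_lt h0 a c2
  have bc2' := cycDist_lt h0 a c2'
  have hnz1 : cycDist m a c2 ≠ 0 := by
    intro hh
    have : c2 = a := cycDist_inj (a := a) (by rw [hxx]; omega)
    exact had' (by rw [hd'eq, ← this]; simp)
  have hnz2 : cycDist m a c2' ≠ 0 := by
    intro hh
    have : c2' = a := cycDist_inj (a := a) (by rw [hxx]; omega)
    exact had' (by rw [hd'eq, ← this]; simp)
  have hcrd : Cross m {c2,c2'} {v,w} := by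
    have := hf.cross_new_old
    rwa [hd'eq, hdvw] at this
  have hs1 : ¬(0 < cycDist m a c2 ∧ cycDist m a c2 < cycDist m a b ∧
      cycDist m a b < cycDist m a c2') := by
    rintro ⟨u1,u2,u3⟩
    exact hXd' (by rw [hd'eq]; exact cross_e_of_coord u1 u2 u3 bc2')
  have hs2 : ¬(0 < cycDist m a c2' ∧ cycDist m a c2' < cycDist m a b ∧
      cycDist m a b < cycDist m a c2) := by
    rintro ⟨u1,u2,u3⟩
    exact hXd' (by rw [hd'eq, Finset.pair_comm c2 c2']; exact cross_e_of_coord u1 u2 u3 bc2)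
  have hscen : (0 < cycDist m a c2 ∧ cycDist m a c2 < cycDist m a v ∧
        cycDist m a v < cycDist m a c2' ∧ cycDist m a c2' ≤ cycDist m a b) ∨
      (0 < cycDist m a c2' ∧ cycDist m a c2' < cycDist m a v ∧
        cycDist m a v < cycDist m a c2 ∧ cycDist m a c2 ≤ cycDist m a b) ∨
      (cycDist m a b ≤ cycDist m a c2 ∧ cycDist m a c2 < cycDist m a w ∧
        cycDist m a w < cycDist m a c2' ∧ cycDist m a c2' < m) ∨
      (cycDist m a b ≤ cycDist m a c2' ∧ cycDist m a c2' < cycDist m a w ∧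
        cycDist m a w < cycDist m a c2 ∧ cycDist m a c2 < m) := by
    rcases cross_coord (a := a) hcrd with ⟨h1,h2⟩|⟨h1,h2⟩ <;> omega
  -- scenario A : d' = {q,p} on side A with q strictly between a and v
  have mainA : ∀ q p : Fin m, d' = ({q,p} : Finset (Fin m)) →
      0 < cycDist m a q → cycDist m a q < cycDist m a v →
      cycDist m a v < cycDist m a p → cycDist m a p ≤ cycDist m a b →
      ∃ g, IsFlip m (piT a b hab hnadj T) (piT a b hab hnadj T') g d' := by
    intro q p hd'qp h1 h2 h3 h4
    have bq := cycDist_lt h0 a q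
    have bp := cycDist_lt h0 a p
    refine ⟨{a,v}, piT_flip_XN_core hab hnadj hf hXd hXd' ?_ ?_ ?_⟩
    · refine mem_fanSet.2 ⟨v, mem_Vset_of hdT hXdvw, ?_, rfl⟩
      intro h; rw [polyAdj_iff a, hxx] at h; omega
    · rw [hd'qp]
      have hc : Cross m {q,p} {v,a} := cross_of_coord (a := a) (by omega) (by omega)
      rwa [Finset.pair_comm v a] at hc
    · intro h hfan hne hc
      obtain ⟨u, huV, hunadj, rfl⟩ := mem_fanSet.1 hfan
      rw [hd'qp] at hc
      have bu := cycDist_lt h0 a u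
      have h6 : cycDist m a q < cycDist m a u ∧ cycDist m a u < cycDist m a p := by
        rcases cross_coord (a := a) hc with ⟨x1,x2⟩|⟨x1,x2⟩ <;> omega
      obtain ⟨u2, hu2T, hu2X⟩ := vset_spec huV
      have bu2 := cycDist_lt h0 a u2
      rcases cross_e_coord hab hnadj hu2X with ⟨e1,e2,e3,e4⟩|⟨e1,e2,e3,e4⟩
      · -- u on side A, partner u2 on side B : {u,u2} crosses d'
        have huu2T' : {u,u2} ∈ T'.diagonals := by
          refine (mem_T'_iff hf).2 (Or.inr ⟨?_, hu2T⟩)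
          intro hh
          have hu_mem : u ∈ ({v,w} : Finset (Fin m)) := by rw [← hdvw, ← hh]; simp
          rcases mem_pair.1 hu_mem with rfl|rfl
          · exact hne rfl
          · omega
        have hncd' : ¬ Cross m {u,u2} {q,p} := by
          have := T'.noncross _ huu2T' _ hf.mem_new
          rwa [hd'qp] at this
        apply hncd'
        have hc2 : Cross m {u,u2} {p,q} := cross_of_coord (a := a) (by omega) (by omega)
        rwa [Finset.pair_comm p q] at hc2
      · omega
  -- scenario B : d' = {p,q} on side B with q strictly between w and a
  have mainB : ∀ p q : Fin m, d' = ({p,q} : Finset (Fin m)) →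
      cycDist m a b ≤ cycDist m a p → cycDist m a p < cycDist m a w →
      cycDist m a w < cycDist m a q → cycDist m a q < m →
      ∃ g, IsFlip m (piT a b hab hnadj T) (piT a b hab hnadj T') g d' := by
    intro p q hd'pq h1 h2 h3 h4
    have bq := cycDist_lt h0 a q
    have bp := cycDist_lt h0 a p
    have hnzp : cycDist m a p ≠ 0 := by
      intro hh
      have : p = a := cycDist_inj (a := a) (by rw [hxx]; omega)
      exact had' (by rw [hd'pq, ← this]; simp)
    refine ⟨{a,w}, piT_flip_XN_core hab hnadj hf hXd hXd' ?_ ?_ ?_⟩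
    · refine mem_fanSet.2 ⟨w, mem_Vset_of' hdT hXdvw, ?_, rfl⟩
      intro h; rw [polyAdj_iff a, hxx] at h; omega
    · rw [hd'pq]
      have hc : Cross m {p,q} {w,a} := cross_of_coord (a := a) (by omega) (by omega)
      rwa [Finset.pair_comm w a] at hc
    · intro h hfan hne hc
      obtain ⟨u, huV, hunadj, rfl⟩ := mem_fanSet.1 hfan
      rw [hd'pq] at hc
      have bu := cycDist_lt h0 a u
      have h6 : cycDist m a p < cycDist m a u ∧ cycDist m a u < cycDist m a q := by
        rcases cross_coord (a := a) hc with ⟨x1,x2⟩|⟨x1,x2⟩ <;> omega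
      obtain ⟨u2, hu2T, hu2X⟩ := vset_spec huV
      have bu2 := cycDist_lt h0 a u2
      rcases cross_e_coord hab hnadj hu2X with ⟨e1,e2,e3,e4⟩|⟨e1,e2,e3,e4⟩
      · omega
      · -- u on side B, partner u2 on side A : {u,u2} crosses d'
        have huu2T' : {u,u2} ∈ T'.diagonals := by
          refine (mem_T'_iff hf).2 (Or.inr ⟨?_, hu2T⟩)
          intro hh
          have hu_mem : u ∈ ({v,w} : Finset (Fin m)) := by rw [← hdvw, ← hh]; simp
          rcases mem_pair.1 hu_mem with rfl|rfl
          · omega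
          · exact hne rfl
        have hncd' : ¬ Cross m {u,u2} {p,q} := by
          have := T'.noncross _ huu2T' _ hf.mem_new
          rwa [hd'pq] at this
        apply hncd'
        have hc2 : Cross m {u,u2} {q,p} := cross_of_coord (a := a) (by omega) (by omega)
        rwa [Finset.pair_comm q p] at hc2
  rcases hscen with h|h|h|h
  · exact mainA c2 c2' hd'eq h.1 h.2.1 h.2.2.1 h.2.2.2
  · exact mainA c2' c2 (by rw [hd'eq, Finset.pair_comm]) h.1 h.2.1 h.2.2.1 h.2.2.2
  · exact mainB c2 c2' hd'eq h.1 h.2.1 h.2.2.1 h.2.2.2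
  · exact mainB c2' c2 (by rw [hd'eq, Finset.pair_comm]) h.1 h.2.1 h.2.2.1 h.2.2.2

lemma piT_flip_main (hab : a ≠ b) (hnadj : ¬ PolyAdj m a b) {T T' : Triangulation m}
    {d d' : Finset (Fin m)} (hf : IsFlip m T T' d d') :
    piT a b hab hnadj T' = piT a b hab hnadj T ∨
      ∃ g g', IsFlip m (piT a b hab hnadj T) (piT a b hab hnadj T') g g' := by
  by_cases hXd : Cross m d ({a,b} : Finset (Fin m)) <;>
    by_cases hXd' : Cross m d' ({a,b} : Finset (Fin m))
  · exact Or.inl (piT_flip_XX hab hnadj hf hXd hXd')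
  · by_cases had' : a ∈ d'
    · exact Or.inl (piT_flip_XN_eq hab hnadj hf hXd had')
    · obtain ⟨g, hg⟩ := piT_flip_XN_flip hab hnadj hf hXd hXd' had'
      exact Or.inr ⟨g, d', hg⟩
  · have hf' := hf.symm'
    by_cases had : a ∈ d
    · exact Or.inl (piT_flip_XN_eq hab hnadj hf' hXd' had).symm
    · obtain ⟨g, hg⟩ := piT_flip_XN_flip hab hnadj hf' hXd' hXd had
      exact Or.inr ⟨d, g, hg.symm'⟩
  · exact (piT_flip_NN hab hnadj hf hXd hXd').imp id (fun h => ⟨d, d', h⟩)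

end Pi6
section Final
variable {m : ℕ}

lemma piT_eq_self {a b : Fin m} (hab : a ≠ b) (hnadj : ¬ PolyAdj m a b)
    {T : Triangulation m} (he : ({a,b} : Finset (Fin m)) ∈ T.diagonals) :
    piT a b hab hnadj T = T := by
  apply Triangulation.ext'
  rw [piT_diag]
  ext g
  rw [mem_piD]
  constructor
  · rintro (rfl | hg | hg)
    · exact he
    · exact (mem_nonX.1 hg).1
    · obtain ⟨v, hv, _, rfl⟩ := mem_fanSet.1 hg
      obtain ⟨w, hwT, hwX⟩ := vset_spec hv
      exact absurd hwX (T.noncross _ hwT _ he)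
  · intro hg
    exact Or.inr (Or.inl (mem_nonX.2 ⟨hg, T.noncross _ hg _ he⟩))

lemma chain_shorten : ∀ (r : ℕ) (Q : ℕ → Triangulation m),
    (∀ i < r, Q (i+1) = Q i ∨ ∃ g g', IsFlip m (Q i) (Q (i+1)) g g') →
    ∃ k, k ≤ r ∧ ∃ F Ts, IsFlipSeq m k F Ts ∧ Ts 0 = Q 0 ∧ Ts k = Q r := by
  intro r
  induction r with
  | zero =>
    intro Q _
    exact ⟨0, le_refl 0, (fun _ => (∅,∅)), (fun _ => Q 0),
      fun i hi => absurd hi (by omega), rfl, rfl⟩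
  | succ n ih =>
    intro Q hQ
    obtain ⟨k, hk, F, Ts, hs, h1, h2⟩ := ih (fun j => Q (j+1))
      (fun j hj => hQ (j+1) (by omega))
    rcases hQ 0 (by omega) with heq | ⟨g, g', hflip⟩
    · exact ⟨k, by omega, F, Ts, hs, by rw [h1]; exact heq, h2⟩
    · refine ⟨k+1, by omega, (fun i => Nat.casesOn i (g,g') (fun j => F j)),
        (fun i => Nat.casesOn i (Q 0) (fun j => Ts j)), ?_, rfl, h2⟩
      intro i hilt
      cases i with
      | zero => show IsFlip m (Q 0) (Ts 0) g g'; rw [h1]; exact hflip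
      | succ j => exact hs j (by omega)

lemma chain_shorten_strict : ∀ (r : ℕ) (Q : ℕ → Triangulation m),
    (∀ i < r, Q (i+1) = Q i ∨ ∃ g g', IsFlip m (Q i) (Q (i+1)) g g') →
    (∃ i, i < r ∧ Q (i+1) = Q i) →
    ∃ k, k < r ∧ ∃ F Ts, IsFlipSeq m k F Ts ∧ Ts 0 = Q 0 ∧ Ts k = Q r := by
  intro r
  induction r with
  | zero =>
    rintro Q _ ⟨i, hi, _⟩
    exact absurd hi (by omega)
  | succ n ih =>
    rintro Q hQ ⟨i, hi, hieq⟩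
    by_cases h00 : Q 1 = Q 0
    · obtain ⟨k, hk, F, Ts, hs, h1, h2⟩ := chain_shorten n (fun j => Q (j+1))
        (fun j hj => hQ (j+1) (by omega))
      exact ⟨k, by omega, F, Ts, hs, by rw [h1]; exact h00, h2⟩
    · rcases hQ 0 (by omega) with heq | ⟨g, g', hflip⟩
      · exact absurd heq h00
      have hi0 : i ≠ 0 := by
        intro hh
        rw [hh] at hieq
        exact h00 hieq
      have hii : i - 1 + 1 = i := by omega
      obtain ⟨k, hk, F, Ts, hs, h1, h2⟩ := ih (fun j => Q (j+1))
        (fun j hj => hQ (j+1) (by omega))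
        ⟨i - 1, by omega, by show Q (i-1+1+1) = Q (i-1+1); rw [hii]; exact hieq⟩
      refine ⟨k+1, by omega, (fun i => Nat.casesOn i (g,g') (fun j => F j)),
        (fun i => Nat.casesOn i (Q 0) (fun j => Ts j)), ?_, rfl, h2⟩
      intro j hjlt
      cases j with
      | zero => show IsFlip m (Q 0) (Ts 0) g g'; rw [h1]; exact hflip
      | succ j' => exact hs j' (by omega)

end Final

/-- Let `Tinit` and `Tfinal` be triangulations of the same convex polygon
sharing a diagonal `e`. Then every flip sequence of minimum length transforming
`Tinit` into `Tfinal` contains no flip whose underlying (removed) diagonal is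
`e`; consequently `e` is a diagonal of every intermediate triangulation along
every shortest path from `Tinit` to `Tfinal`. -/
theorem common_diagonal_never_flipped (m : ℕ) (hm : 3 ≤ m)
    (Tinit Tfinal : Triangulation m) (e : Finset (Fin m))
    (heI : e ∈ Tinit.diagonals) (heF : e ∈ Tfinal.diagonals)
    (r : ℕ) (F : ℕ → Finset (Fin m) × Finset (Fin m)) (Ts : ℕ → Triangulation m)
    (hseq : IsFlipSeq m r F Ts) (h0 : Ts 0 = Tinit) (hr : Ts r = Tfinal)
    (hmin : r = FlipDist m Tinit Tfinal) :
    (∀ i < r, (F i).1 ≠ e) ∧ (∀ i ≤ r, e ∈ (Ts i).diagonals) := by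
  obtain ⟨a, b, hab, hnadj, heq⟩ := Tinit.isDiagonal e heI
  subst heq
  have part1 : ∀ i < r, (F i).1 ≠ ({a,b} : Finset (Fin m)) := by
    intro i hi hFie
    have hchain : ∀ j < r, piT a b hab hnadj (Ts (j+1)) = piT a b hab hnadj (Ts j) ∨
        ∃ g g', IsFlip m (piT a b hab hnadj (Ts j)) (piT a b hab hnadj (Ts (j+1))) g g' :=
      fun j hj => piT_flip_main hab hnadj (hseq j hj)
    have heqi : piT a b hab hnadj (Ts (i+1)) = piT a b hab hnadj (Ts i) := by
      have hfi := hseq i hi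
      rw [hFie] at hfi
      exact piT_flip_e hab hnadj hfi
    obtain ⟨k, hk, F', Ts', hseq', hT0, hTk⟩ :=
      chain_shorten_strict r (fun j => piT a b hab hnadj (Ts j)) hchain ⟨i, hi, heqi⟩
    have h00 : Ts' 0 = Tinit := by
      rw [hT0]
      show piT a b hab hnadj (Ts 0) = Tinit
      rw [h0]
      exact piT_eq_self hab hnadj heI
    have hrr : Ts' k = Tfinal := by
      rw [hTk]
      show piT a b hab hnadj (Ts r) = Tfinal
      rw [hr]
      exact piT_eq_self hab hnadj heF
    have hmem : k ∈ {r | ∃ F Ts, IsFlipSeq m r F Ts ∧ Ts 0 = Tinit ∧ Ts r = Tfinal} :=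
      ⟨F', Ts', hseq', h00, hrr⟩
    have hle : FlipDist m Tinit Tfinal ≤ k := Nat.sInf_le hmem
    omega
  refine ⟨part1, ?_⟩
  intro i
  induction i with
  | zero =>
    intro _
    rw [h0]
    exact heI
  | succ n ihn =>
    intro hi
    have hn : n < r := by omega
    have hmem := ihn (by omega)
    exact (mem_T'_iff (hseq n hn)).2 (Or.inr ⟨Ne.symm (part1 n hn), hmem⟩)
end

section
/- Let T_init and T_final be triangulations of the same convex polygon with Dist(T_init, T_final) = φ(T_init) − C(T_init, T_final) (a trivial pair). Then there exists a flip sequence of this minimum length transforming T_init into T_final in which every flip is performed on a diagonal that is a free-diagonal (with respect to T_final) of the triangulation in which it is flipped. -/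
open Finset

/-- Let `Tinit` and `Tfinal` be triangulations of the same convex polygon with
`Dist(Tinit, Tfinal) = φ(Tinit) − C(Tinit, Tfinal)` (a trivial pair). Then
there exists a flip sequence of this minimum length transforming `Tinit` into
`Tfinal` in which every flip is performed on a diagonal that is a
free-diagonal (with respect to `Tfinal`) of the triangulation in which it is
flipped. -/
theorem trivial_pair_free_sequence (m : ℕ) (hm : 3 ≤ m)
    (Tinit Tfinal : Triangulation m)
    (htriv : FlipDist m Tinit Tfinal =
      Tinit.diagonals.card - (Tinit.diagonals ∩ Tfinal.diagonals).card) :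
    ∃ (F : ℕ → Finset (Fin m) × Finset (Fin m)) (Ts : ℕ → Triangulation m),
      IsFlipSeq m (FlipDist m Tinit Tfinal) F Ts ∧
      Ts 0 = Tinit ∧ Ts (FlipDist m Tinit Tfinal) = Tfinal ∧
      ∀ i < FlipDist m Tinit Tfinal, FreeDiagonal m (Ts i) Tfinal (F i).1 := by
  classical
  set d := FlipDist m Tinit Tfinal with hdd
  by_cases hd0 : d = 0
  · -- degenerate case: Tinit = Tfinal
    have hcard : (Tinit.diagonals ∩ Tfinal.diagonals).card
        + (Tinit.diagonals \ Tfinal.diagonals).card = Tinit.diagonals.card :=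
      Finset.card_inter_add_card_sdiff _ _
    have h2 : (Tinit.diagonals \ Tfinal.diagonals).card = 0 := by omega
    have hsub : Tinit.diagonals ⊆ Tfinal.diagonals := by
      intro x hx
      by_contra hxt
      have hxm : x ∈ Tinit.diagonals \ Tfinal.diagonals := mem_sdiff.mpr ⟨hx, hxt⟩
      rw [Finset.card_eq_zero.mp h2] at hxm
      exact absurd hxm (notMem_empty x)
    have hsub2 : Tfinal.diagonals ⊆ Tinit.diagonals := by
      intro e he
      exact Tinit.maximal e (Tfinal.isDiagonal e he)
        (fun e' he' => Tfinal.noncross e he e' (hsub he'))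
    have heq : Tinit = Tfinal := by
      have hde : Tinit.diagonals = Tfinal.diagonals := Finset.Subset.antisymm hsub hsub2
      cases Tinit
      cases Tfinal
      simp only at hde
      subst hde
      rfl
    refine ⟨fun _ => (∅, ∅), fun _ => Tinit, ?_, rfl, ?_, ?_⟩
    · intro i hi
      exact absurd hi (by omega)
    · exact heq
    · intro i hi
      exact absurd hi (by omega)
  · -- main case
    have hne : Set.Nonempty {r | ∃ F Ts, IsFlipSeq m r F Ts ∧ Ts 0 = Tinit ∧ Ts r = Tfinal} := by
      by_contra h
      rw [Set.not_nonempty_iff_eq_empty] at h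
      have : d = 0 := by rw [hdd]; unfold FlipDist; rw [h]; exact Nat.sInf_empty
      exact hd0 this
    have hmem : d ∈ {r | ∃ F Ts, IsFlipSeq m r F Ts ∧ Ts 0 = Tinit ∧ Ts r = Tfinal} := by
      rw [hdd]; exact Nat.sInf_mem hne
    obtain ⟨F, Ts, hseq, h0, hlast⟩ := hmem
    set c : ℕ → ℕ := fun i => ((Ts i).diagonals \ Tfinal.diagonals).card with hc
    have step1 : ∀ i < d, c i ≤ c (i + 1) + 1 := by
      intro i hi
      obtain ⟨he, he', hnew⟩ := hseq i hi
      have hsub : (Ts i).diagonals \ Tfinal.diagonals ⊆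
          insert (F i).1 ((Ts (i + 1)).diagonals \ Tfinal.diagonals) := by
        intro x hx
        rw [mem_sdiff] at hx
        by_cases hxe : x = (F i).1
        · exact mem_insert.mpr (Or.inl hxe)
        · refine mem_insert.mpr (Or.inr (mem_sdiff.mpr ⟨?_, hx.2⟩))
          rw [hnew]
          exact mem_insert.mpr (Or.inr (mem_erase.mpr ⟨hxe, hx.1⟩))
      calc c i ≤ (insert (F i).1 ((Ts (i + 1)).diagonals \ Tfinal.diagonals)).card :=
            card_le_card hsub
        _ ≤ c (i + 1) + 1 := card_insert_le _ _
    have step2 : ∀ j < d, (F j).2 ∉ Tfinal.diagonals → c j ≤ c (j + 1) := by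
      intro j hj hbad
      obtain ⟨he, he', hnew⟩ := hseq j hj
      have h1 : insert (F j).2 (((Ts j).diagonals \ Tfinal.diagonals).erase (F j).1) ⊆
          (Ts (j + 1)).diagonals \ Tfinal.diagonals := by
        intro x hx
        rcases mem_insert.mp hx with rfl | hx
        · exact mem_sdiff.mpr ⟨by rw [hnew]; exact mem_insert_self _ _, hbad⟩
        · rw [mem_erase] at hx
          have hx2 := mem_sdiff.mp hx.2
          refine mem_sdiff.mpr ⟨?_, hx2.2⟩
          rw [hnew]
          exact mem_insert.mpr (Or.inr (mem_erase.mpr ⟨hx.1, hx2.1⟩))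
      have h2 : (F j).2 ∉ ((Ts j).diagonals \ Tfinal.diagonals).erase (F j).1 := by
        intro hx
        exact he' (mem_sdiff.mp (mem_of_mem_erase hx)).1
      have h3 := card_insert_of_notMem h2
      have h4 : (Ts j).diagonals \ Tfinal.diagonals ⊆
          insert (F j).1 (((Ts j).diagonals \ Tfinal.diagonals).erase (F j).1) := by
        intro x hx
        by_cases hxe : x = (F j).1
        · exact mem_insert.mpr (Or.inl hxe)
        · exact mem_insert.mpr (Or.inr (mem_erase.mpr ⟨hxe, hx⟩))
      have h5 := card_le_card h4
      have h6 := card_insert_le (F j).1 (((Ts j).diagonals \ Tfinal.diagonals).erase (F j).1)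
      have h7 := card_le_card h1
      simp only [hc] at *
      omega
    have chain : ∀ a k, a + k ≤ d → c a ≤ c (a + k) + k := by
      intro a k
      induction k with
      | zero => simp
      | succ n ih =>
        intro h
        have h1 := ih (by omega)
        have h2 := step1 (a + n) (by omega)
        have h3 : a + (n + 1) = a + n + 1 := by omega
        rw [h3]
        omega
    have hc0 : c 0 = d := by
      have hcard : (Tinit.diagonals ∩ Tfinal.diagonals).card
          + (Tinit.diagonals \ Tfinal.diagonals).card = Tinit.diagonals.card :=
        Finset.card_inter_add_card_sdiff _ _
      simp only [hc, h0]
      omega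
    have hcd : c d = 0 := by
      simp [hc, hlast]
    have hkey : ∀ i < d, (F i).2 ∈ Tfinal.diagonals := by
      intro j hj
      by_contra hbad
      have hA := step2 j hj hbad
      have hB := chain 0 j (by omega)
      rw [Nat.zero_add] at hB
      have hC := chain (j + 1) (d - (j + 1)) (by omega)
      have hE : j + 1 + (d - (j + 1)) = d := by omega
      rw [hE] at hC
      omega
    exact ⟨F, Ts, hseq, h0, hlast,
      fun i hi => ⟨Ts (i + 1), (F i).2, hseq i hi, hkey i hi⟩⟩
end
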